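/- arXiv:1708.03818 — 4 statements merged into one kernel-verified Lean document; each statement's English description precedes it below -/
import Mathlib

section
/- (Uniform convergence of the empirical moment vector; key step in the proof of Theorem 1.) Suppose θ̂_n →P θ* and assumptions (A2)–(A4) hold. Then β ↦ U_0(β, θ*) is continuous on D_β and sup_{β ∈ D_β} ‖U_n(β, θ̂_n) − U_0(β, θ*)‖ converges to 0 in probability as n → ∞. -/
open MeasureTheory ProbabilityTheory Filter Topology
open Metric




lemma gmeta_osc {α M E : Type*} [MeasurableSpace α] [MetricSpace M] [SecondCountableTopology M]
    [NormedAddCommGroup E] [MeasurableSpace E] [BorelSpace E] [SecondCountableTopology E]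
    (μ : Measure α) [IsProbabilityMeasure μ] (F : α → M → E) (C : Set M)
    (hFmeas : ∀ t, Measurable fun x => F x t)
    (hcont : ∀ᵐ x ∂μ, ContinuousOn (F x) C)
    (g : α → ℝ) (hg : Integrable g μ) (henv : ∀ᵐ x ∂μ, ∀ t ∈ C, ‖F x t‖ ≤ g x)
    (t₀ : M) (ht₀ : t₀ ∈ C) {ε : ℝ} (hε : 0 < ε) :
    ∃ r > 0, ∃ φ : α → ℝ, Measurable φ ∧ Integrable φ μ ∧ (∀ x, 0 ≤ φ x) ∧
      (∀ᵐ x ∂μ, ∀ s ∈ C ∩ Metric.ball t₀ r, ‖F x s - F x t₀‖ ≤ φ x) ∧ ∫ x, φ x ∂μ ≤ ε := by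
  classical
  -- countable dense subset of C
  obtain ⟨s₀, hs₀count, hs₀dense⟩ := TopologicalSpace.exists_countable_dense (↥C)
  set D : Set M := Subtype.val '' s₀ with hD
  have hDC : D ⊆ C := by rintro x ⟨y, -, rfl⟩; exact y.2
  have hDcount : D.Countable := (hs₀count.image _)
  have hDdense : ∀ t ∈ C, ∀ V : Set M, IsOpen V → t ∈ V → ∃ dd ∈ D, dd ∈ V := by
    intro t ht V hV htV
    have : (⟨t, ht⟩ : ↥C) ∈ closure s₀ := by rw [hs₀dense.closure_eq]; trivial
    rw [_root_.mem_closure_iff] at this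
    obtain ⟨y, hy, hys⟩ := this (Subtype.val ⁻¹' V) (hV.preimage continuous_subtype_val) htV
    exact ⟨y, ⟨y, hys, rfl⟩, hy⟩
  haveI : Countable ↥D := hDcount.to_subtype
  -- the oscillation functions
  set Φ : ℝ → α → ENNReal := fun r x =>
    ⨆ dd : ↥D, ⨆ _ : (dd : M) ∈ ball t₀ r, (‖F x dd - F x t₀‖₊ : ENNReal) with hΦ
  have hΦmeas : ∀ r, Measurable (Φ r) := by
    intro r
    refine Measurable.iSup fun dd => Measurable.iSup_Prop _ ?_
    exact ((hFmeas dd).sub (hFmeas t₀)).nnnorm.coe_nnreal_ennreal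
  set φ : ℝ → α → ℝ := fun r x => (Φ r x).toReal with hφ
  have hφmeas : ∀ r, Measurable (φ r) := fun r => (hΦmeas r).ennreal_toReal
  have hφnonneg : ∀ r x, 0 ≤ φ r x := fun r x => ENNReal.toReal_nonneg
  -- good points
  have hgood := hcont.and henv
  -- bounds on good points
  have key : ∀ᵐ x ∂μ, ContinuousOn (F x) C ∧ (∀ t ∈ C, ‖F x t‖ ≤ g x) ∧
      (∀ r, Φ r x ≤ ENNReal.ofReal (2 * g x)) ∧ (∀ r, φ r x ≤ 2 * g x) := by
    filter_upwards [hgood] with x hx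
    obtain ⟨hc, he⟩ := hx
    have hgx : 0 ≤ g x := le_trans (norm_nonneg _) (he t₀ ht₀)
    have h1 : ∀ r, Φ r x ≤ ENNReal.ofReal (2 * g x) := by
      intro r
      refine iSup_le fun dd => iSup_le fun _ => ?_
      rw [← enorm_eq_nnnorm, ← ofReal_norm]
      refine ENNReal.ofReal_le_ofReal ?_
      calc ‖F x dd - F x t₀‖ ≤ ‖F x (dd : M)‖ + ‖F x t₀‖ := norm_sub_le _ _
        _ ≤ g x + g x := add_le_add (he _ (hDC dd.2)) (he _ ht₀)
        _ = 2 * g x := by ring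
    refine ⟨hc, he, h1, fun r => ?_⟩
    exact ENNReal.toReal_le_of_le_ofReal (by linarith) (h1 r)
  -- domination of true oscillation by φ
  have hdom : ∀ r, ∀ᵐ x ∂μ, ∀ s ∈ C ∩ ball t₀ r, ‖F x s - F x t₀‖ ≤ φ r x := by
    intro r
    filter_upwards [key] with x hx
    obtain ⟨hc, he, h1, h2⟩ := hx
    intro s hs
    have hΦne : Φ r x ≠ ⊤ := (lt_of_le_of_lt (h1 r) ENNReal.ofReal_lt_top).ne
    refine le_of_forall_pos_le_add fun η hη => ?_
    -- find dd ∈ D near s inside ball t₀ r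
    have hcs := hc s hs.1
    rw [Metric.continuousWithinAt_iff] at hcs
    obtain ⟨ρ, hρpos, hρ⟩ := hcs η hη
    obtain ⟨dd, hddD, hddV⟩ := hDdense s hs.1 (ball t₀ r ∩ ball s ρ)
      ((isOpen_ball).inter isOpen_ball) ⟨hs.2, mem_ball_self hρpos⟩
    have hdist : dist (F x dd) (F x s) < η := by
      have := hρ (hDC hddD) (by simpa [dist_comm] using hddV.2)
      simpa [dist_comm] using this
    have hterm : ‖F x dd - F x t₀‖ ≤ φ r x := by
      have hle : (‖F x dd - F x t₀‖₊ : ENNReal) ≤ Φ r x := by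
        refine le_trans ?_ (le_iSup _ (⟨dd, hddD⟩ : ↥D))
        exact le_iSup (fun _ : (dd : M) ∈ ball t₀ r => (‖F x dd - F x t₀‖₊ : ENNReal)) hddV.1
      have := ENNReal.toReal_mono hΦne hle
      simpa using this
    calc ‖F x s - F x t₀‖ ≤ ‖F x s - F x dd‖ + ‖F x dd - F x t₀‖ := norm_sub_le_norm_sub_add_norm_sub _ _ _
      _ ≤ η + φ r x := add_le_add (by rw [← dist_eq_norm]; rw [dist_comm]; exact hdist.le) hterm
      _ = φ r x + η := by ring
  -- pointwise convergence of φ (1/(m+1)) to 0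
  set rs : ℕ → ℝ := fun m => ((m : ℝ) + 1)⁻¹ with hrs
  have hrspos : ∀ m, 0 < rs m := fun m => by positivity
  have hptwise : ∀ᵐ x ∂μ, Tendsto (fun m => φ (rs m) x) atTop (𝓝 0) := by
    filter_upwards [key] with x hx
    obtain ⟨hc, he, h1, h2⟩ := hx
    rw [Metric.tendsto_atTop]
    intro η hη
    have hcs := hc t₀ ht₀
    rw [Metric.continuousWithinAt_iff] at hcs
    obtain ⟨ρ, hρpos, hρ⟩ := hcs (η/2) (by linarith)
    obtain ⟨M₀, hM₀⟩ := exists_nat_gt ρ⁻¹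
    refine ⟨M₀, fun m hm => ?_⟩
    have hrm : rs m ≤ ρ := by
      rw [hrs]
      rw [inv_le_comm₀ (by positivity) hρpos]
      have h1 : (M₀ : ℝ) ≤ (m : ℝ) := by exact_mod_cast hm
      linarith
    have hΦsmall : Φ (rs m) x ≤ ENNReal.ofReal (η/2) := by
      refine iSup_le fun dd => iSup_le fun hdd => ?_
      rw [← enorm_eq_nnnorm, ← ofReal_norm]
      refine ENNReal.ofReal_le_ofReal ?_
      have hdd' : dist (dd : M) t₀ < ρ := lt_of_lt_of_le (mem_ball.1 hdd) hrm
      have := hρ (hDC dd.2) hdd'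
      rw [dist_eq_norm] at this
      exact this.le
    have hφsmall : φ (rs m) x ≤ η / 2 :=
      ENNReal.toReal_le_of_le_ofReal (by linarith) hΦsmall
    rw [Real.dist_eq]
    rw [abs_of_nonneg (by simpa using sub_nonneg.2 (hφnonneg _ x) : (0:ℝ) ≤ φ (rs m) x - 0)]
    · linarith
  -- integrability
  have h2g : Integrable (fun x => 2 * g x) μ := hg.const_mul 2
  have hφint : ∀ r, Integrable (φ r) μ := by
    intro r
    refine Integrable.mono' h2g (hφmeas r).aestronglyMeasurable ?_
    filter_upwards [key] with x hx
    rw [Real.norm_eq_abs, abs_of_nonneg (hφnonneg r x)]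
    exact hx.2.2.2 r
  -- dominated convergence
  have hDCT : Tendsto (fun m => ∫ x, φ (rs m) x ∂μ) atTop (𝓝 (∫ _x, (0:ℝ) ∂μ)) := by
    refine tendsto_integral_of_dominated_convergence (fun x => 2 * g x)
      (fun m => (hφmeas (rs m)).aestronglyMeasurable) h2g ?_ hptwise
    intro m
    filter_upwards [key] with x hx
    rw [Real.norm_eq_abs, abs_of_nonneg (hφnonneg _ x)]
    exact hx.2.2.2 _
  rw [integral_zero] at hDCT
  have : ∀ᶠ m in atTop, ∫ x, φ (rs m) x ∂μ ≤ ε := by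
    refine (hDCT.eventually (eventually_le_nhds hε))
  obtain ⟨m, hm⟩ := this.exists
  exact ⟨rs m, hrspos m, φ (rs m), hφmeas _, hφint _, fun x => hφnonneg _ x, hdom _, hm⟩


noncomputable def gblock {K : ℕ} {d : Fin K → ℕ}
    (v : EuclideanSpace ℝ ((k : Fin K) × Fin (d k))) (k : Fin K) :
    EuclideanSpace ℝ (Fin (d k)) :=
  (EuclideanSpace.equiv (Fin (d k)) ℝ).symm (fun i => v ⟨k, i⟩)

@[simp] lemma gblock_apply {K : ℕ} {d : Fin K → ℕ}
    (v : EuclideanSpace ℝ ((k : Fin K) × Fin (d k))) (k : Fin K) (i : Fin (d k)) :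
    gblock v k i = v ⟨k, i⟩ := rfl

lemma gmeta_sum_sq_le_sq_sum {ι : Type*} [Fintype ι] (f : ι → ℝ) (hf : ∀ i, 0 ≤ f i) :
    ∑ i : ι, f i ^ 2 ≤ (∑ i : ι, f i) ^ 2 := by
  rw [sq (∑ i : ι, f i), Finset.sum_mul]
  refine Finset.sum_le_sum fun i _ => ?_
  rw [sq]
  exact mul_le_mul_of_nonneg_left (Finset.single_le_sum (fun j _ => hf j) (Finset.mem_univ i)) (hf i)

lemma gmeta_norm_le_sum_blocks {K : ℕ} {d : Fin K → ℕ}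
    (v : EuclideanSpace ℝ ((k : Fin K) × Fin (d k))) :
    ‖v‖ ≤ ∑ k : Fin K, ‖gblock v k‖ := by
  rw [EuclideanSpace.norm_eq]
  have hsplit : ∑ ki : (k : Fin K) × Fin (d k), ‖v ki‖ ^ 2
      = ∑ k : Fin K, ∑ i : Fin (d k), ‖v ⟨k, i⟩‖ ^ 2 := by
    rw [← Finset.univ_sigma_univ, Finset.sum_sigma]
  have hblock : ∀ k : Fin K, ∑ i : Fin (d k), ‖v ⟨k, i⟩‖ ^ 2 = ‖gblock v k‖ ^ 2 := by
    intro k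
    rw [EuclideanSpace.norm_eq (gblock v k), Real.sq_sqrt (by positivity)]
    simp
  rw [hsplit]
  simp_rw [hblock]
  refine (Real.sqrt_le_sqrt (gmeta_sum_sq_le_sq_sum _ (fun k => norm_nonneg _))).trans ?_
  rw [Real.sqrt_sq (by positivity)]

lemma gmeta_cont {α M E : Type*} [MeasurableSpace α] [MetricSpace M] [SecondCountableTopology M]
    [NormedAddCommGroup E] [NormedSpace ℝ E] [MeasurableSpace E] [BorelSpace E] [SecondCountableTopology E]
    (μ : Measure α) [IsProbabilityMeasure μ] (F : α → M → E) (C : Set M)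
    (hFmeas : ∀ t, Measurable fun x => F x t)
    (hcont : ∀ᵐ x ∂μ, ContinuousOn (F x) C)
    (g : α → ℝ) (hg : Integrable g μ) (henv : ∀ᵐ x ∂μ, ∀ t ∈ C, ‖F x t‖ ≤ g x)
    (hIntF : ∀ t ∈ C, Integrable (fun x => F x t) μ) :
    ContinuousOn (fun t => ∫ x, F x t ∂μ) C := by
  intro t₀ ht₀
  rw [Metric.continuousWithinAt_iff]
  intro ε hε
  obtain ⟨r, hr, φ, hφm, hφi, hφ0, hφdom, hφint⟩ :=
    gmeta_osc μ F C hFmeas hcont g hg henv t₀ ht₀ (half_pos hε)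
  refine ⟨r, hr, fun {s} hs hdist => ?_⟩
  have hs' : s ∈ C ∩ ball t₀ r := ⟨hs, by rwa [mem_ball]⟩
  have h1 : dist (∫ x, F x s ∂μ) (∫ x, F x t₀ ∂μ) ≤ ∫ x, φ x ∂μ := by
    rw [dist_eq_norm, ← integral_sub (hIntF s hs) (hIntF t₀ ht₀)]
    refine (norm_integral_le_integral_norm _).trans ?_
    refine integral_mono_ae ((hIntF s hs).sub (hIntF t₀ ht₀)).norm hφi ?_
    filter_upwards [hφdom] with x hx using hx s hs'
  calc dist (∫ x, F x s ∂μ) (∫ x, F x t₀ ∂μ) ≤ ∫ x, φ x ∂μ := h1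
    _ ≤ ε / 2 := hφint
    _ < ε := by linarith

set_option maxHeartbeats 1000000

/-- **Uniform convergence of the empirical moment vector** (key step in the proof of
Theorem 1 of Tang, Kundu & Chatterjee).  Under (A2)–(A4) and consistency of the study
estimators `θhat n`, the population moment map `β ↦ U₀(β, θ*)` is continuous on `Dβ` and
`sup_{β ∈ Dβ} ‖U_n(β, θ̂_n) − U₀(β, θ*)‖ → 0` in probability. -/
theorem gmeta_uniform_convergence_moment
    {Ω : Type} [MeasurableSpace Ω] (P : Measure Ω) [IsProbabilityMeasure P]
    (K p q : ℕ) (hK : 1 ≤ K) (d : Fin K → ℕ)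
    -- moment functions of the K studies
    (u : (k : Fin K) → EuclideanSpace ℝ (Fin q) → EuclideanSpace ℝ (Fin p) →
      EuclideanSpace ℝ (Fin (d k)) → EuclideanSpace ℝ (Fin (d k)))
    (humeas : ∀ k : Fin K, Measurable (fun xbt :
        EuclideanSpace ℝ (Fin q) × EuclideanSpace ℝ (Fin p) × EuclideanSpace ℝ (Fin (d k)) =>
        u k xbt.1 xbt.2.1 xbt.2.2))
    -- the i.i.d. reference sample with common law μ
    (μ : Measure (EuclideanSpace ℝ (Fin q))) [IsProbabilityMeasure μ]
    (X : ℕ → Ω → EuclideanSpace ℝ (Fin q))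
    (hXmeas : ∀ i, Measurable (X i))
    (hXiid : iIndepFun X P)
    (hXlaw : ∀ i, Measure.map (X i) P = μ)
    -- parameter sets and true values
    (Dβ : Set (EuclideanSpace ℝ (Fin p)))
    (N : (k : Fin K) → Set (EuclideanSpace ℝ (Fin (d k))))
    (θstar : (k : Fin K) → EuclideanSpace ℝ (Fin (d k)))
    (hNopen : ∀ k, IsOpen (N k)) (hNmem : ∀ k, θstar k ∈ N k)
    -- stacked moment function and its population version
    (U : EuclideanSpace ℝ (Fin q) → EuclideanSpace ℝ (Fin p) →
      ((k : Fin K) → EuclideanSpace ℝ (Fin (d k))) →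
      EuclideanSpace ℝ ((k : Fin K) × Fin (d k)))
    (hU : ∀ x β θ (ki : (k : Fin K) × Fin (d k)), U x β θ ki = u ki.1 x β (θ ki.1) ki.2)
    (U₀ : EuclideanSpace ℝ (Fin p) → ((k : Fin K) → EuclideanSpace ℝ (Fin (d k))) →
      EuclideanSpace ℝ ((k : Fin K) × Fin (d k)))
    (hU₀ : ∀ β θ, U₀ β θ = ∫ x, U x β θ ∂μ)
    -- estimators, independent of the reference sample, converging in probability to θstar
    (θhat : ℕ → Ω → ((k : Fin K) → EuclideanSpace ℝ (Fin (d k))))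
    (hθmeas : ∀ n k, Measurable (fun ω => θhat n ω k))
    (hθindep : ∀ n, IndepFun (θhat n) (fun ω i => X i ω) P)
    (hθconv : ∀ k, TendstoInMeasure P (fun n ω => θhat n ω k) atTop (fun _ => θstar k))
    -- empirical moment vector
    (Un : ℕ → Ω → EuclideanSpace ℝ (Fin p) → EuclideanSpace ℝ ((k : Fin K) × Fin (d k)))
    (hUn : ∀ n ω β, Un n ω β = (n : ℝ)⁻¹ • ∑ i ∈ Finset.range n, U (X i ω) β (θhat n ω))
    -- (A2): D_β is compact
    (hA2 : IsCompact Dβ)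
    -- (A3): a.s. continuity of the moment functions on D_β × N(θ_k*)
    (hA3 : ∀ k, ∀ᵐ x ∂μ, ContinuousOn
      (fun bt : EuclideanSpace ℝ (Fin p) × EuclideanSpace ℝ (Fin (d k)) => u k x bt.1 bt.2)
      (Dβ ×ˢ N k))
    -- (A4): integrable envelope on D_β × N(θ_k*)
    (hA4 : ∀ k, ∃ g : EuclideanSpace ℝ (Fin q) → ℝ, Integrable g μ ∧
      ∀ᵐ x ∂μ, ∀ β ∈ Dβ, ∀ t ∈ N k, ‖u k x β t‖ ≤ g x) :
    ContinuousOn (fun β => U₀ β θstar) Dβ ∧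
      TendstoInMeasure P (fun n ω => ⨆ β ∈ Dβ, ‖Un n ω β - U₀ β θstar‖) atTop
        (fun _ => (0 : ℝ)) := by
  classical
  -- trivial case: empty parameter set
  rcases Set.eq_empty_or_nonempty Dβ with hDβ | hDβne
  · subst hDβ
    constructor
    · exact continuousOn_empty _
    · have hS : ∀ n ω, (⨆ β ∈ (∅ : Set (EuclideanSpace ℝ (Fin p))), ‖Un n ω β - U₀ β θstar‖)
          = (0 : ℝ) := by
        intro n ω
        simp [Real.iSup_of_isEmpty]
      rw [tendstoInMeasure_iff_dist]
      intro ε hε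
      have : ∀ n : ℕ, {ω | ε ≤ dist (⨆ β ∈ (∅ : Set (EuclideanSpace ℝ _)),
          ‖Un n ω β - U₀ β θstar‖) (0:ℝ)} = (∅ : Set Ω) := by
        intro n
        ext ω
        simp only [Set.mem_setOf_eq, Set.mem_empty_iff_false, iff_false, not_le, hS n ω]
        simpa using hε
      simp only [this]
      simpa using tendsto_const_nhds
  -- the stacked moment function on the product parameter space
  set F : EuclideanSpace ℝ (Fin q) →
      (EuclideanSpace ℝ (Fin p) × ((k : Fin K) → EuclideanSpace ℝ (Fin (d k)))) →
      EuclideanSpace ℝ ((k : Fin K) × Fin (d k)) := fun x m => U x m.1 m.2 with hF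
  set N' : Set ((k : Fin K) → EuclideanSpace ℝ (Fin (d k))) := Set.univ.pi N with hN'
  have hN'open : IsOpen N' := isOpen_set_pi Set.finite_univ (fun k _ => hNopen k)
  have hθN' : θstar ∈ N' := fun k _ => hNmem k
  obtain ⟨δ₀, hδ₀pos, hδ₀⟩ := Metric.isOpen_iff.1 hN'open θstar hθN'
  set δ : ℝ := δ₀ / 2 with hδdef
  have hδpos : 0 < δ := by positivity
  have hCθ : closedBall θstar δ ⊆ N' :=
    (closedBall_subset_ball (by simp [hδdef]; linarith)).trans hδ₀
  set C : Set (EuclideanSpace ℝ (Fin p) × ((k : Fin K) → EuclideanSpace ℝ (Fin (d k)))) :=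
    Dβ ×ˢ closedBall θstar δ with hC
  have hCcomp : IsCompact C := hA2.prod (isCompact_closedBall _ _)
  have hCsub : C ⊆ Dβ ×ˢ N' := Set.prod_mono_right hCθ
  -- measurability of F in x
  have hFmeas : ∀ m, Measurable fun x => F x m := by
    intro m
    have hcoord : ∀ ki : (k : Fin K) × Fin (d k),
        Measurable fun x => u ki.1 x m.1 (m.2 ki.1) ki.2 := by
      intro ki
      have h0 : Measurable fun x : EuclideanSpace ℝ (Fin q) => (x, (m.1, m.2 ki.1)) :=
        measurable_id.prodMk measurable_const
      have h1 : Measurable fun x => u ki.1 x m.1 (m.2 ki.1) := (humeas ki.1).comp h0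
      exact ((EuclideanSpace.proj ki.2).continuous.measurable).comp h1
    have hFm : (fun x => F x m) = fun x =>
        (MeasurableEquiv.toLp 2 (((k : Fin K) × Fin (d k)) → ℝ))
          (fun ki => u ki.1 x m.1 (m.2 ki.1) ki.2) := by
      funext x
      refine PiLp.ext fun ki => ?_
      simpa [MeasurableEquiv.coe_toLp, hF] using hU x m.1 m.2 ki
    rw [hFm]
    exact (MeasurableEquiv.toLp 2 _).measurable.comp
      (measurable_pi_lambda _ hcoord)
  -- a.e. continuity of F in the parameter
  have hFcont : ∀ᵐ x ∂μ, ContinuousOn (F x) (Dβ ×ˢ N') := by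
    have hall : ∀ᵐ x ∂μ, ∀ k, ContinuousOn
        (fun bt : EuclideanSpace ℝ (Fin p) × EuclideanSpace ℝ (Fin (d k)) => u k x bt.1 bt.2)
        (Dβ ×ˢ N k) := (ae_all_iff).2 hA3
    filter_upwards [hall] with x hx
    have h1 : ContinuousOn (fun m : EuclideanSpace ℝ (Fin p) ×
          ((k : Fin K) → EuclideanSpace ℝ (Fin (d k))) =>
          (EuclideanSpace.equiv ((k : Fin K) × Fin (d k)) ℝ).symm
            (fun ki => u ki.1 x m.1 (m.2 ki.1) ki.2)) (Dβ ×ˢ N') := by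
      apply Continuous.comp_continuousOn (EuclideanSpace.equiv _ ℝ).symm.continuous
      apply continuousOn_pi.2
      intro ki
      have hmap : ContinuousOn (fun m : EuclideanSpace ℝ (Fin p) ×
            ((k : Fin K) → EuclideanSpace ℝ (Fin (d k))) => (m.1, m.2 ki.1)) (Dβ ×ˢ N') :=
        (continuous_fst.prodMk ((continuous_apply ki.1).comp continuous_snd)).continuousOn
      have hmapsTo : Set.MapsTo (fun m : EuclideanSpace ℝ (Fin p) ×
            ((k : Fin K) → EuclideanSpace ℝ (Fin (d k))) => (m.1, m.2 ki.1))
          (Dβ ×ˢ N') (Dβ ×ˢ N ki.1) :=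
        fun m hm => ⟨hm.1, hm.2 ki.1 (Set.mem_univ _)⟩
      exact (EuclideanSpace.proj ki.2).continuous.comp_continuousOn
        ((hx ki.1).comp hmap hmapsTo)
    have heq : ∀ m, F x m = (EuclideanSpace.equiv ((k : Fin K) × Fin (d k)) ℝ).symm
        (fun ki => u ki.1 x m.1 (m.2 ki.1) ki.2) := by
      intro m
      refine PiLp.ext fun ki => ?_
      simpa [hF] using hU x m.1 m.2 ki
    exact (funext heq : F x = _) ▸ h1
  have hFcontC : ∀ᵐ x ∂μ, ContinuousOn (F x) C := by
    filter_upwards [hFcont] with x hx using hx.mono hCsub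
  -- envelope
  choose g hgint hgenv using hA4
  set G : EuclideanSpace ℝ (Fin q) → ℝ := fun x => ∑ k : Fin K, g k x with hG
  have hGint : Integrable G μ := integrable_finset_sum _ (fun k _ => hgint k)
  have hGenv : ∀ᵐ x ∂μ, ∀ m ∈ Dβ ×ˢ N', ‖F x m‖ ≤ G x := by
    have hall : ∀ᵐ x ∂μ, ∀ k, ∀ β ∈ Dβ, ∀ t ∈ N k, ‖u k x β t‖ ≤ g k x := ae_all_iff.2 hgenv
    filter_upwards [hall] with x hx m hm
    have hblockeq : ∀ k, gblock (F x m) k = u k x m.1 (m.2 k) := by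
      intro k
      refine PiLp.ext fun i => ?_
      have := hU x m.1 m.2 ⟨k, i⟩
      simpa [gblock_apply, hF] using this
    calc ‖F x m‖ ≤ ∑ k : Fin K, ‖gblock (F x m) k‖ := gmeta_norm_le_sum_blocks _
      _ ≤ ∑ k : Fin K, g k x := Finset.sum_le_sum fun k _ => by
          rw [hblockeq]
          exact hx k m.1 hm.1 (m.2 k) (hm.2 k (Set.mem_univ _))
  have hGenvC : ∀ᵐ x ∂μ, ∀ m ∈ C, ‖F x m‖ ≤ G x := by
    filter_upwards [hGenv] with x hx using fun m hm => hx m (hCsub hm)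
  -- integrability of F in the parameter
  have hIntF : ∀ m ∈ C, Integrable (fun x => F x m) μ := by
    intro m hm
    refine Integrable.mono' hGint (hFmeas m).aestronglyMeasurable ?_
    filter_upwards [hGenvC] with x hx using hx m hm
  -- the population moment map
  set PF : (EuclideanSpace ℝ (Fin p) × ((k : Fin K) → EuclideanSpace ℝ (Fin (d k)))) →
      EuclideanSpace ℝ ((k : Fin K) × Fin (d k)) := fun m => ∫ x, F x m ∂μ with hPF
  have hU₀PF : ∀ β θ, U₀ β θ = PF (β, θ) := fun β θ => hU₀ β θ
  have hPFcont : ContinuousOn PF C :=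
    gmeta_cont μ F C hFmeas hFcontC G hGint hGenvC hIntF
  have hθC : ∀ β ∈ Dβ, (β, θstar) ∈ C := fun β hβ => ⟨hβ, mem_closedBall_self hδpos.le⟩
  -- first conclusion
  have hcont1 : ContinuousOn (fun β => U₀ β θstar) Dβ := by
    have h := hPFcont.comp
      ((continuous_id.prodMk continuous_const).continuousOn :
        ContinuousOn (fun β => (β, θstar)) Dβ) (fun β hβ => hθC β hβ)
    simpa only [Function.comp_def, id_eq, ← hU₀PF] using h
  refine ⟨hcont1, ?_⟩
  -- second conclusion: convergence in probability
  rw [tendstoInMeasure_iff_dist]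
  intro ε0 hε0
  -- uniform continuity of PF on C
  have hUC := hCcomp.uniformContinuousOn_of_continuous hPFcont
  rw [Metric.uniformContinuousOn_iff] at hUC
  obtain ⟨δ'', hδ''pos, hδ''⟩ := hUC (ε0/2) (by linarith)
  set δ' : ℝ := min (δ''/2) δ with hδ'def
  have hδ'pos : 0 < δ' := lt_min (by linarith) hδpos
  -- oscillation data at every point of C
  have hosc : ∀ t : ↥C, ∃ r > 0, ∃ φ, Measurable φ ∧ Integrable φ μ ∧ (∀ x, 0 ≤ φ x) ∧
      (∀ᵐ x ∂μ, ∀ s ∈ C ∩ ball (↑t) r, ‖F x s - F x ↑t‖ ≤ φ x) ∧ ∫ x, φ x ∂μ ≤ ε0/16 :=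
    fun t => gmeta_osc μ F C hFmeas hFcontC G hGint hGenvC ↑t t.2 (by linarith)
  choose r hrpos φ hφmeas hφint hφ0 hφdom hφle using hosc
  -- finite subcover
  have hcover : C ⊆ ⋃ t : ↥C, ball (↑t) (r t) := fun t ht =>
    Set.mem_iUnion.2 ⟨⟨t, ht⟩, mem_ball_self (hrpos _)⟩
  obtain ⟨T, hT⟩ := hCcomp.elim_finite_subcover (fun t : ↥C => ball (↑t) (r t))
    (fun _ => isOpen_ball) hcover
  -- oscillation of the population moment map
  have hPFosc : ∀ j : ↥C, ∀ s ∈ C ∩ ball (↑j) (r j), ‖PF ↑j - PF s‖ ≤ ε0/16 := by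
    intro j s hs
    rw [norm_sub_rev, hPF]
    rw [← integral_sub (hIntF s hs.1) (hIntF _ j.2)]
    refine (norm_integral_le_integral_norm _).trans
      ((integral_mono_ae ((hIntF s hs.1).sub (hIntF _ j.2)).norm (hφint j) ?_).trans (hφle j))
    filter_upwards [hφdom j] with x hx using hx s hs
  -- good sample points
  set Good : EuclideanSpace ℝ (Fin q) → Prop := fun x =>
    ∀ j ∈ (↑T : Set ↥C), ∀ s ∈ C ∩ ball (↑j) (r j), ‖F x s - F x ↑j‖ ≤ φ j x with hGoodDef
  have hGoodae : ∀ᵐ x ∂μ, Good x :=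
    (ae_ball_iff T.countable_toSet).2 (fun j _ => hφdom j)
  set Bad : Set (EuclideanSpace ℝ (Fin q)) := toMeasurable μ {x | ¬ Good x} with hBadDef
  have hBadnull : μ Bad = 0 := by
    rw [hBadDef, measure_toMeasurable]
    rw [ae_iff] at hGoodae
    exact hGoodae
  have hXBad : ∀ i, P ((X i) ⁻¹' Bad) = 0 := by
    intro i
    have h1 : P ((X i) ⁻¹' Bad) = μ Bad := by
      rw [← hXlaw i, Measure.map_apply (hXmeas i) (measurableSet_toMeasurable _ _)]
    rw [h1, hBadnull]
  -- the events
  set val : ↥C → ℕ → Ω → ℝ := fun j n ω =>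
    (n:ℝ)⁻¹ * ∑ i ∈ Finset.range n, φ j (X i ω) +
      ‖(n:ℝ)⁻¹ • ∑ i ∈ Finset.range n, F (X i ω) ↑j - PF ↑j‖ with hvalDef
  set A : ↥C → ℕ → Set Ω := fun j n => {ω | ε0/4 ≤ val j n ω} with hADef
  set B : Fin K → ℕ → Set Ω := fun k n => {ω | δ' ≤ dist (θhat n ω k) (θstar k)} with hBDef
  set Z : ℕ → Set Ω := fun n => ⋃ i ∈ Finset.range n, (X i) ⁻¹' Bad with hZDef
  have hPZ : ∀ n, P (Z n) = 0 := fun n => le_antisymm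
    ((measure_biUnion_finset_le _ _).trans (by simp [hXBad])) zero_le
  -- convergence of the A events
  have hid : ∀ i, IdentDistrib (X i) (X 0) P P := fun i =>
    ⟨(hXmeas i).aemeasurable, (hXmeas 0).aemeasurable, by rw [hXlaw i, hXlaw 0]⟩
  have hPA : ∀ j : ↥C, Tendsto (fun n => P (A j n)) atTop (𝓝 0) := by
    intro j
    have hY0 : Integrable (fun ω => φ j (X 0 ω)) P := by
      have h := hφint j
      rw [← hXlaw 0] at h
      exact (integrable_map_measure (hφmeas j).aestronglyMeasurable
        (hXmeas 0).aemeasurable).1 h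
    have hlln1 := strong_law_ae_real (fun i ω => φ j (X i ω)) hY0
      (fun i i' hii' => (hXiid.indepFun hii').comp (hφmeas j) (hφmeas j))
      (fun i => (hid i).comp (hφmeas j))
    have hEY : (∫ ω, φ j (X 0 ω) ∂P) = ∫ x, φ j x ∂μ := by
      rw [← hXlaw 0, integral_map (hXmeas 0).aemeasurable (hφmeas j).aestronglyMeasurable]
    have hZ0 : Integrable (fun ω => F (X 0 ω) ↑j) P := by
      have h := hIntF _ j.2
      rw [← hXlaw 0] at h
      exact (integrable_map_measure (hFmeas _).aestronglyMeasurable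
        (hXmeas 0).aemeasurable).1 h
    have hlln2 := strong_law_ae (fun i ω => F (X i ω) ↑j) hZ0
      (fun i i' hii' => (hXiid.indepFun hii').comp (hFmeas _) (hFmeas _))
      (fun i => (hid i).comp (hFmeas _))
    have hEZ : (∫ ω, F (X 0 ω) ↑j ∂P) = PF ↑j := by
      have hPFj : PF ↑j = ∫ x, F x ↑j ∂μ := rfl
      rw [hPFj, ← hXlaw 0,
        integral_map (hXmeas 0).aemeasurable (hFmeas _).aestronglyMeasurable]
    set c : ℝ := ∫ x, φ j x ∂μ with hc
    have hcε : c ≤ ε0/16 := hφle j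
    have hvaltend : ∀ᵐ ω ∂P, Tendsto (fun n => val j n ω) atTop (𝓝 c) := by
      filter_upwards [hlln1, hlln2] with ω h1 h2
      rw [hEZ] at h2
      rw [hEY] at h1
      have h2' : Tendsto (fun n : ℕ =>
          ‖(n:ℝ)⁻¹ • ∑ i ∈ Finset.range n, F (X i ω) ↑j - PF ↑j‖) atTop (𝓝 0) := by
        simpa using (h2.sub_const (PF ↑j)).norm
      have h1' : Tendsto (fun n : ℕ =>
          (n:ℝ)⁻¹ * ∑ i ∈ Finset.range n, φ j (X i ω)) atTop (𝓝 c) := by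
        simpa [div_eq_inv_mul] using h1
      simpa [hvalDef] using h1'.add h2'
    have hvalmeas : ∀ n, AEStronglyMeasurable (val j n) P := by
      intro n
      apply Measurable.aestronglyMeasurable
      apply Measurable.add
      · exact (Finset.measurable_sum _ (fun i _ => (hφmeas j).comp (hXmeas i))).const_mul _
      · apply Measurable.norm
        apply Measurable.sub _ measurable_const
        exact (Finset.measurable_sum (Finset.range n) (fun i _ => (hFmeas (↑j)).comp (hXmeas i))).const_smul ((n:ℝ)⁻¹)
    have htm := tendstoInMeasure_of_tendsto_ae hvalmeas hvaltend
    have hlim := tendstoInMeasure_iff_dist.1 htm (3*ε0/16) (by linarith)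
    refine tendsto_of_tendsto_of_tendsto_of_le_of_le tendsto_const_nhds hlim
      (fun _ => zero_le) ?_
    intro n
    refine measure_mono ?_
    intro ω hω
    have h1 : ε0/4 ≤ val j n ω := hω
    have h2 : 3*ε0/16 ≤ dist (val j n ω) c := by
      rw [Real.dist_eq]
      calc (3:ℝ)*ε0/16 ≤ val j n ω - c := by linarith
        _ ≤ |val j n ω - c| := le_abs_self _
    exact h2
  have hPB : ∀ k, Tendsto (fun n => P (B k n)) atTop (𝓝 0) := fun k => tendstoInMeasure_iff_dist.1 (hθconv k) δ' hδ'pos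
  -- the main inclusion
  have hincl : ∀ n, {ω | ε0 ≤ dist (⨆ β ∈ Dβ, ‖Un n ω β - U₀ β θstar‖) (0:ℝ)}
      ⊆ (⋃ j ∈ T, A j n) ∪ ((⋃ k, B k n) ∪ Z n) := by
    intro n ω hω
    by_contra hmem
    simp only [Set.mem_union, Set.mem_iUnion, not_or, not_exists] at hmem
    obtain ⟨hA', hB', hZ'⟩ := hmem
    have hθclose : ∀ k, dist (θhat n ω k) (θstar k) < δ' := by
      intro k
      by_contra h
      exact hB' k (le_of_not_gt h)
    have hdθ : dist (θhat n ω) θstar ≤ δ' :=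
      (dist_pi_le_iff hδ'pos.le).2 (fun k => (hθclose k).le)
    have hbound : ∀ β ∈ Dβ, ‖Un n ω β - U₀ β θstar‖ ≤ 13/16*ε0 := by
      intro β hβ
      have hsθC : (β, θhat n ω) ∈ C := ⟨hβ, mem_closedBall.2 (hdθ.trans (min_le_right _ _))⟩
      obtain ⟨j, hjT, hjball⟩ : ∃ j ∈ T, (β, θhat n ω) ∈ ball (↑j) (r j) := by
        have h := hT hsθC
        simpa using h
      have hXg : ∀ i ∈ Finset.range n, ∀ s ∈ C ∩ ball (↑j) (r j),
          ‖F (X i ω) s - F (X i ω) ↑j‖ ≤ φ j (X i ω) := by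
        intro i hi
        have hXB : X i ω ∉ Bad := fun hc => hZ' (Set.mem_biUnion hi hc)
        have hg : Good (X i ω) := by
          by_contra h
          exact hXB (subset_toMeasurable _ _ h)
        exact hg j (Finset.mem_coe.2 hjT)
      have hUnF : Un n ω β = (n:ℝ)⁻¹ • ∑ i ∈ Finset.range n, F (X i ω) (β, θhat n ω) := by
        rw [hUn n ω β]
      have hdecomp : Un n ω β - U₀ β θstar =
          ((n:ℝ)⁻¹ • ∑ i ∈ Finset.range n, (F (X i ω) (β, θhat n ω) - F (X i ω) ↑j))
          + ((n:ℝ)⁻¹ • ∑ i ∈ Finset.range n, F (X i ω) ↑j - PF ↑j)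
          + (PF ↑j - PF (β, θhat n ω)) + (PF (β, θhat n ω) - PF (β, θstar)) := by
        rw [hUnF, hU₀PF, Finset.sum_sub_distrib, smul_sub]
        abel
      have ht1 : ‖(n:ℝ)⁻¹ • ∑ i ∈ Finset.range n, (F (X i ω) (β, θhat n ω) - F (X i ω) ↑j)‖
          ≤ (n:ℝ)⁻¹ * ∑ i ∈ Finset.range n, φ j (X i ω) := by
        rw [norm_smul, norm_inv, Real.norm_natCast]
        refine mul_le_mul_of_nonneg_left ?_ (by positivity)
        exact (norm_sum_le _ _).trans
          (Finset.sum_le_sum fun i hi => hXg i hi _ ⟨hsθC, hjball⟩)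
      have ht3 : ‖PF ↑j - PF (β, θhat n ω)‖ ≤ ε0/16 := hPFosc j _ ⟨hsθC, hjball⟩
      have ht4 : ‖PF (β, θhat n ω) - PF (β, θstar)‖ ≤ ε0/2 := by
        have hβθC : (β, θstar) ∈ C := hθC β hβ
        have hd : dist (β, θhat n ω) ((β, θstar) :
            EuclideanSpace ℝ (Fin p) × ((k : Fin K) → EuclideanSpace ℝ (Fin (d k)))) < δ'' := by
          rw [Prod.dist_eq]
          simp only [dist_self]
          have hmax : max (0:ℝ) (dist (θhat n ω) θstar) = dist (θhat n ω) θstar :=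
            max_eq_right dist_nonneg
          rw [hmax]
          have : δ' ≤ δ''/2 := min_le_left _ _
          linarith [hdθ]
        have h := hδ'' _ hsθC _ hβθC hd
        rw [dist_eq_norm] at h
        exact h.le.trans (by linarith)
      have hval' : val j n ω < ε0/4 := not_le.1 (hA' j hjT)
      calc ‖Un n ω β - U₀ β θstar‖
          = ‖((n:ℝ)⁻¹ • ∑ i ∈ Finset.range n, (F (X i ω) (β, θhat n ω) - F (X i ω) ↑j))
            + ((n:ℝ)⁻¹ • ∑ i ∈ Finset.range n, F (X i ω) ↑j - PF ↑j)
            + (PF ↑j - PF (β, θhat n ω)) + (PF (β, θhat n ω) - PF (β, θstar))‖ := by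
            rw [hdecomp]
        _ ≤ ‖((n:ℝ)⁻¹ • ∑ i ∈ Finset.range n, (F (X i ω) (β, θhat n ω) - F (X i ω) ↑j))
            + ((n:ℝ)⁻¹ • ∑ i ∈ Finset.range n, F (X i ω) ↑j - PF ↑j)
            + (PF ↑j - PF (β, θhat n ω))‖ + ‖PF (β, θhat n ω) - PF (β, θstar)‖ :=
            norm_add_le _ _
        _ ≤ (‖((n:ℝ)⁻¹ • ∑ i ∈ Finset.range n, (F (X i ω) (β, θhat n ω) - F (X i ω) ↑j))‖
            + ‖(n:ℝ)⁻¹ • ∑ i ∈ Finset.range n, F (X i ω) ↑j - PF ↑j‖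
            + ‖PF ↑j - PF (β, θhat n ω)‖) + ‖PF (β, θhat n ω) - PF (β, θstar)‖ := by
            gcongr
            exact norm_add₃_le
        _ ≤ ((n:ℝ)⁻¹ * ∑ i ∈ Finset.range n, φ j (X i ω)
            + ‖(n:ℝ)⁻¹ • ∑ i ∈ Finset.range n, F (X i ω) ↑j - PF ↑j‖
            + ε0/16) + ε0/2 := by
            gcongr
        _ = val j n ω + ε0/16 + ε0/2 := by rw [hvalDef]
        _ ≤ ε0/4 + ε0/16 + ε0/2 := by linarith
        _ = 13/16*ε0 := by ring
    have hS : (⨆ β ∈ Dβ, ‖Un n ω β - U₀ β θstar‖) ≤ 13/16*ε0 :=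
      Real.iSup_le (fun β => Real.iSup_le (fun hβ => hbound β hβ) (by linarith)) (by linarith)
    have hS0 : 0 ≤ ⨆ β ∈ Dβ, ‖Un n ω β - U₀ β θstar‖ :=
      Real.iSup_nonneg (fun β => Real.iSup_nonneg (fun _ => norm_nonneg _))
    have hlt : dist (⨆ β ∈ Dβ, ‖Un n ω β - U₀ β θstar‖) (0:ℝ) < ε0 := by
      rw [Real.dist_eq, sub_zero, abs_of_nonneg hS0]
      linarith
    exact absurd hω (not_le.2 hlt)
  -- put everything together
  have hmain : ∀ n, P {ω | ε0 ≤ dist (⨆ β ∈ Dβ, ‖Un n ω β - U₀ β θstar‖) (0:ℝ)}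
      ≤ ∑ j ∈ T, P (A j n) + ∑ k : Fin K, P (B k n) := by
    intro n
    refine (measure_mono (hincl n)).trans ?_
    refine (measure_union_le _ _).trans ?_
    refine add_le_add (measure_biUnion_finset_le _ _) ?_
    refine (measure_union_le _ _).trans ?_
    rw [hPZ n, add_zero]
    refine (measure_iUnion_le _).trans ?_
    rw [tsum_fintype]
  have hlimsum : Tendsto (fun n => ∑ j ∈ T, P (A j n) + ∑ k : Fin K, P (B k n))
      atTop (𝓝 0) := by
    have h1 : Tendsto (fun n => ∑ j ∈ T, P (A j n)) atTop (𝓝 0) := by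
      have h := tendsto_finset_sum T (fun j (_ : j ∈ T) => hPA j)
      simpa using h
    have h2 : Tendsto (fun n => ∑ k : Fin K, P (B k n)) atTop (𝓝 0) := by
      have h := tendsto_finset_sum Finset.univ (fun k (_ : k ∈ Finset.univ) => hPB k)
      simpa using h
    simpa using h1.add h2
  exact tendsto_of_tendsto_of_tendsto_of_le_of_le tendsto_const_nhds hlimsum
    (fun _ => zero_le) hmain
end

section
/- (Optimality of the weighting matrix C_opt = (Δ+Λ)^{-1}.) Let Γ be a d×p real matrix of full column rank p, let V be a d×d symmetric positive definite matrix, and let C be a d×d symmetric positive semi-definite matrix such that ΓᵀCΓ is invertible. Then the matrix (ΓᵀCΓ)^{-1} ΓᵀC V CΓ (ΓᵀCΓ)^{-1} − (Γᵀ V^{-1} Γ)^{-1} is positive semi-definite, and it equals the zero matrix when C = V^{-1}. In particular, the choice C = V^{-1} minimizes the asymptotic covariance matrix (ΓᵀCΓ)^{-1} ΓᵀC V CΓ (ΓᵀCΓ)^{-1} in the Loewner order, with minimal value (Γᵀ V^{-1} Γ)^{-1}. -/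
open Matrix

lemma mulVec_inj_of_rank {d p : ℕ} (Γ : Matrix (Fin d) (Fin p) ℝ) (hΓ : Γ.rank = p) :
    Function.Injective Γ.mulVecLin := by
  rw [← LinearMap.ker_eq_bot]
  have h := LinearMap.finrank_range_add_finrank_ker Γ.mulVecLin
  rw [Matrix.rank] at hΓ
  rw [hΓ, Module.finrank_fin_fun] at h
  exact Submodule.finrank_eq_zero.mp (by omega)

lemma gram_posDef {d p : ℕ} (Γ : Matrix (Fin d) (Fin p) ℝ) (hΓ : Γ.rank = p)
    {W : Matrix (Fin d) (Fin d) ℝ} (hW : W.PosDef) : (Γᵀ * W * Γ).PosDef := by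
  refine Matrix.posDef_iff_dotProduct_mulVec.mpr ⟨?_, ?_⟩
  · show (Γᵀ * W * Γ)ᴴ = Γᵀ * W * Γ
    rw [conjTranspose_mul, conjTranspose_mul, hW.isHermitian.eq]
    simp [Matrix.conjTranspose_eq_transpose_of_trivial, Matrix.mul_assoc]
  · intro x hx
    have hΓx : Γ *ᵥ x ≠ 0 := by
      intro h
      exact hx (mulVec_inj_of_rank Γ hΓ (by simpa using h))
    have := hW.dotProduct_mulVec_pos hΓx
    simpa [star_trivial, ← Matrix.mulVec_mulVec, Matrix.dotProduct_mulVec,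
      Matrix.vecMul_transpose, Matrix.mul_assoc] using this

/-- **Optimality of the weighting matrix `C_opt = (Δ+Λ)⁻¹ = V⁻¹`** in Theorem 1 of
Tang, Kundu & Chatterjee: for any positive semi-definite weighting matrix `C` with `ΓᵀCΓ`
invertible, the asymptotic covariance `(ΓᵀCΓ)⁻¹ ΓᵀC V CΓ (ΓᵀCΓ)⁻¹` dominates
`(ΓᵀV⁻¹Γ)⁻¹` in the Loewner order, with equality for `C = V⁻¹`. -/
theorem gmeta_optimal_weighting
    (d p : ℕ) (Γ : Matrix (Fin d) (Fin p) ℝ) (hΓ : Γ.rank = p)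
    (V : Matrix (Fin d) (Fin d) ℝ) (hV : V.PosDef)
    (C : Matrix (Fin d) (Fin d) ℝ) (hC : C.PosSemidef)
    (hinv : IsUnit (Γᵀ * C * Γ)) :
    Matrix.PosSemidef
      ((Γᵀ * C * Γ)⁻¹ * (Γᵀ * C * V * C * Γ) * (Γᵀ * C * Γ)⁻¹ - (Γᵀ * V⁻¹ * Γ)⁻¹) ∧
    (C = V⁻¹ →
      (Γᵀ * C * Γ)⁻¹ * (Γᵀ * C * V * C * Γ) * (Γᵀ * C * Γ)⁻¹ = (Γᵀ * V⁻¹ * Γ)⁻¹) := by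
  have hVinv : (V⁻¹).PosDef := hV.inv
  have hB : (Γᵀ * V⁻¹ * Γ).PosDef := gram_posDef Γ hΓ hVinv
  set A := Γᵀ * C * Γ with hAdef
  set B := Γᵀ * V⁻¹ * Γ with hBdef
  have hAdet : IsUnit A.det := (Matrix.isUnit_iff_isUnit_det A).mp hinv
  have hBdet : IsUnit B.det := (Matrix.isUnit_iff_isUnit_det B).mp hB.isUnit
  have hVdet : IsUnit V.det := (Matrix.isUnit_iff_isUnit_det V).mp hV.isUnit
  have hAinv : A⁻¹ * A = 1 := Matrix.nonsing_inv_mul A hAdet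
  have hBinv : B⁻¹ * B = 1 := Matrix.nonsing_inv_mul B hBdet
  have hBinv' : B * B⁻¹ = 1 := Matrix.mul_nonsing_inv B hBdet
  have hVV : V * V⁻¹ = 1 := Matrix.mul_nonsing_inv V hVdet
  have hVV' : V⁻¹ * V = 1 := Matrix.nonsing_inv_mul V hVdet
  -- symmetry facts
  have hCt : Cᵀ = C := by
    have := hC.isHermitian.eq
    rwa [Matrix.conjTranspose_eq_transpose_of_trivial] at this
  have hVit : (V⁻¹)ᵀ = V⁻¹ := by
    have := hVinv.isHermitian.eq
    rwa [Matrix.conjTranspose_eq_transpose_of_trivial] at this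
  have hAt : Aᵀ = A := by
    rw [hAdef]; simp [Matrix.transpose_mul, hCt, Matrix.mul_assoc]
  have hBt : Bᵀ = B := by
    rw [hBdef]; simp [Matrix.transpose_mul, hVit, Matrix.mul_assoc]
  have hAit : (A⁻¹)ᵀ = A⁻¹ := by rw [Matrix.transpose_nonsing_inv, hAt]
  have hBit : (B⁻¹)ᵀ = B⁻¹ := by rw [Matrix.transpose_nonsing_inv, hBt]
  set D := A⁻¹ * Γᵀ * C - B⁻¹ * Γᵀ * V⁻¹ with hDdef
  have hDt : Dᵀ = C * Γ * A⁻¹ - V⁻¹ * Γ * B⁻¹ := by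
    rw [hDdef, Matrix.transpose_sub]
    simp [Matrix.transpose_mul, hCt, hVit, hAit, hBit, Matrix.mul_assoc]
  -- four expansion terms
  have key1 : A⁻¹ * Γᵀ * C * V * (C * Γ * A⁻¹)
      = A⁻¹ * (Γᵀ * C * V * C * Γ) * A⁻¹ := by
    simp [Matrix.mul_assoc]
  have key2 : A⁻¹ * Γᵀ * C * V * (V⁻¹ * Γ * B⁻¹) = B⁻¹ := by
    calc A⁻¹ * Γᵀ * C * V * (V⁻¹ * Γ * B⁻¹)
        = A⁻¹ * (Γᵀ * C * ((V * V⁻¹) * Γ)) * B⁻¹ := by simp [Matrix.mul_assoc]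
      _ = A⁻¹ * A * B⁻¹ := by rw [hVV, Matrix.one_mul, hAdef, Matrix.mul_assoc]
      _ = B⁻¹ := by rw [hAinv, Matrix.one_mul]
  have key3 : B⁻¹ * Γᵀ * V⁻¹ * V * (C * Γ * A⁻¹) = B⁻¹ := by
    calc B⁻¹ * Γᵀ * V⁻¹ * V * (C * Γ * A⁻¹)
        = B⁻¹ * (Γᵀ * ((V⁻¹ * V) * (C * Γ))) * A⁻¹ := by simp [Matrix.mul_assoc]
      _ = B⁻¹ * A * A⁻¹ := by rw [hVV', Matrix.one_mul, hAdef]; simp [Matrix.mul_assoc]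
      _ = B⁻¹ := by rw [Matrix.mul_assoc, Matrix.mul_nonsing_inv A hAdet, Matrix.mul_one]
  have key4 : B⁻¹ * Γᵀ * V⁻¹ * V * (V⁻¹ * Γ * B⁻¹) = B⁻¹ := by
    calc B⁻¹ * Γᵀ * V⁻¹ * V * (V⁻¹ * Γ * B⁻¹)
        = B⁻¹ * (Γᵀ * (V⁻¹ * ((V * V⁻¹) * Γ))) * B⁻¹ := by simp [Matrix.mul_assoc]
      _ = B⁻¹ * B * B⁻¹ := by rw [hVV, Matrix.one_mul, hBdef]; simp [Matrix.mul_assoc]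
      _ = B⁻¹ := by rw [hBinv, Matrix.one_mul]
  have main : D * V * Dᵀ
      = A⁻¹ * (Γᵀ * C * V * C * Γ) * A⁻¹ - B⁻¹ := by
    rw [hDt, hDdef]
    rw [Matrix.sub_mul, Matrix.sub_mul, Matrix.mul_sub, Matrix.mul_sub]
    rw [key1, key2, key3, key4]
    abel
  constructor
  · rw [← main]
    have h := hV.posSemidef.mul_mul_conjTranspose_same D
    rwa [Matrix.conjTranspose_eq_transpose_of_trivial] at h
  · intro hCV
    subst hCV
    have hAB : A = B := rfl
    have hmid : Γᵀ * V⁻¹ * V * V⁻¹ * Γ = B := by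
      rw [Matrix.mul_assoc (Γᵀ * V⁻¹) V V⁻¹, hVV, Matrix.mul_one, hBdef]
    calc A⁻¹ * (Γᵀ * V⁻¹ * V * V⁻¹ * Γ) * A⁻¹
        = B⁻¹ * B * B⁻¹ := by rw [hAB, hmid]
      _ = B⁻¹ := by rw [hBinv, Matrix.one_mul]
end

section
/- (Asymptotic equivalence of GMeta and fixed-effect meta-analysis, equation (4).) Suppose: (i) n_k/n → c_k > 0 for each k = 1,…,K; (ii) for each k, √n(θ̂_{n,k} − β*) is bounded in probability (tight) as n → ∞; (iii) the random matrices Σ̂_{n,k} converge in probability to a common invertible matrix Σ; (iv) the optimally-weighted GMeta estimator β̂_opt admits the expansion √n(β̂_opt − β*) = −M_n · √n U_n(β*, θ̂_n), where M_n converges in probability to M = (Σ_{k=1}^K c_k)^{-1} [c_1 Σ, …, c_K Σ] (a p × Kp block row matrix), and √n U_n(β*, θ̂_n) + (Σ^{-1}√n(θ̂_{n,1} − β*)ᵀ, …, Σ^{-1}√n(θ̂_{n,K} − β*)ᵀ)ᵀ converges to 0 in probability. Define the fixed-effect meta-analysis estimator β̂_meta = (Σ_{k=1}^K (Σ̂_{n,k}/n_k)^{-1})^{-1}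 Σ_{k=1}^K (Σ̂_{n,k}/n_k)^{-1} θ̂_{n,k}. Then √n(β̂_opt − β̂_meta) converges to 0 in probability; i.e., β̂_opt = β̂_meta + o_p(1/√n). -/
open MeasureTheory ProbabilityTheory Filter Topology Matrix
open scoped ENNReal

namespace GMetaAux

variable {Ω : Type} [MeasurableSpace Ω] {P : Measure Ω}

/-- convergence in measure (to a constant) for real sequences -/
def TIM (P : Measure Ω) (f : ℕ → Ω → ℝ) (a : ℝ) : Prop :=
  ∀ ε : ℝ, 0 < ε → Tendsto (fun n => P {ω | ε ≤ dist (f n ω) a}) atTop (𝓝 0)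

/-- bounded in probability -/
def Tight (P : Measure Ω) (f : ℕ → Ω → ℝ) : Prop :=
  ∀ ε : ℝ, 0 < ε → ∃ M : ℝ, ∀ᶠ n : ℕ in atTop, P {ω | M < |f n ω|} ≤ ENNReal.ofReal ε

lemma tendsto_zero_of_le {u v : ℕ → ℝ≥0∞} (h : ∀ᶠ n in atTop, u n ≤ v n)
    (hv : Tendsto v atTop (𝓝 0)) : Tendsto u atTop (𝓝 0) :=
  tendsto_of_tendsto_of_tendsto_of_le_of_le' tendsto_const_nhds hv
    (Eventually.of_forall fun _ => zero_le) h

lemma tim_of_eq {f : ℕ → Ω → ℝ} {a a' : ℝ} (h : TIM P f a) (ha : a = a') :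
    TIM P f a' := ha ▸ h

lemma tim_congr {f g : ℕ → Ω → ℝ} {a : ℝ} (h : ∀ n ω, f n ω = g n ω)
    (hg : TIM P g a) : TIM P f a := by
  have : f = g := funext fun n => funext fun ω => h n ω
  rw [this]; exact hg

/-- main workhorse: continuous mapping for convergence in probability to constants -/
lemma tim_comp {ι : Type*} [Fintype ι] {X : ℕ → Ω → ι → ℝ} {a : ι → ℝ}
    (hX : ∀ i, TIM P (fun n ω => X n ω i) (a i))
    {f : (ι → ℝ) → ℝ} (hf : ContinuousAt f a) :
    TIM P (fun n ω => f (X n ω)) (f a) := by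
  intro ε hε
  obtain ⟨δ, hδ, hfd⟩ := Metric.continuousAt_iff.mp hf ε hε
  have hsub : ∀ n, {ω | ε ≤ dist (f (X n ω)) (f a)}
      ⊆ ⋃ i, {ω | δ ≤ dist (X n ω i) (a i)} := by
    intro n ω hω
    by_contra hc
    simp only [Set.mem_iUnion, Set.mem_setOf_eq, not_exists, not_le] at hc
    have : dist (X n ω) a < δ := (dist_pi_lt_iff hδ).2 hc
    exact absurd (hfd this) (not_lt.2 hω)
  refine tendsto_zero_of_le (v := fun n => ∑ i, P {ω | δ ≤ dist (X n ω i) (a i)})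
    (Eventually.of_forall fun n =>
      (measure_mono (hsub n)).trans (measure_iUnion_fintype_le P _)) ?_
  have : Tendsto (fun n => ∑ i, P {ω | δ ≤ dist (X n ω i) (a i)}) atTop
      (𝓝 (∑ _i : ι, (0 : ℝ≥0∞))) :=
    tendsto_finset_sum _ fun i _ => hX i δ hδ
  simpa using this

lemma tim_const {u : ℕ → ℝ} {a : ℝ} (h : Tendsto u atTop (𝓝 a)) :
    TIM P (fun n _ => u n) a := by
  intro ε hε
  have hev : ∀ᶠ n in atTop, dist (u n) a < ε := (Metric.tendsto_nhds.mp h) ε hε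
  refine tendsto_zero_of_le ?_ tendsto_const_nhds
  filter_upwards [hev] with n hn
  have : {ω : Ω | ε ≤ dist (u n) a} = ∅ := by
    ext ω; simp only [Set.mem_setOf_eq, Set.mem_empty_iff_false, iff_false, not_le]; exact hn
  simp [this]

lemma tight_of_tim {f : ℕ → Ω → ℝ} {a : ℝ} (h : TIM P f a) : Tight P f := by
  intro ε hε
  refine ⟨|a| + 1, ?_⟩
  have h1 := h 1 one_pos
  have := (ENNReal.tendsto_atTop_zero.mp h1) (ENNReal.ofReal ε)
      (by simp [ENNReal.ofReal_pos, hε])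
  obtain ⟨N, hN⟩ := this
  filter_upwards [eventually_ge_atTop N] with n hn
  refine le_trans (measure_mono ?_) (hN n hn)
  intro ω hω
  simp only [Set.mem_setOf_eq] at hω ⊢
  have : |f n ω| - |a| ≤ |f n ω - a| := abs_sub_abs_le_abs_sub _ _
  have h2 : 1 ≤ |f n ω - a| := by linarith [abs_nonneg (f n ω - a)]
  simpa [Real.dist_eq] using h2

lemma tight_mul_tim0 {f g : ℕ → Ω → ℝ} (hf : Tight P f) (hg : TIM P g 0) :
    TIM P (fun n ω => f n ω * g n ω) 0 := by
  intro ε hε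
  rw [ENNReal.tendsto_atTop_zero]
  intro η hη
  set η' : ℝ≥0∞ := min η 1 with hη'def
  have hη'pos : 0 < η' := lt_min hη one_pos
  have hη'top : η' ≠ ⊤ := ne_top_of_le_ne_top ENNReal.one_ne_top (min_le_right _ _)
  have hη'real : 0 < η'.toReal := ENNReal.toReal_pos hη'pos.ne' hη'top
  obtain ⟨M, hM⟩ := hf (η'.toReal / 2) (by positivity)
  set M' : ℝ := max M 1 with hM'def
  have hM'pos : (0:ℝ) < M' := lt_of_lt_of_le one_pos (le_max_right _ _)
  have hg2 := (ENNReal.tendsto_atTop_zero.mp (hg (ε / M') (by positivity)))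
      (ENNReal.ofReal (η'.toReal / 2)) (by simp [ENNReal.ofReal_pos]; positivity)
  obtain ⟨N2, hN2⟩ := hg2
  have hMev : ∃ N1, ∀ n ≥ N1, P {ω | M < |f n ω|} ≤ ENNReal.ofReal (η'.toReal / 2) :=
    eventually_atTop.mp hM
  obtain ⟨N1, hN1⟩ := hMev
  refine ⟨max N1 N2, fun n hn => ?_⟩
  have hsub : {ω | ε ≤ dist (f n ω * g n ω) 0}
      ⊆ {ω | M < |f n ω|} ∪ {ω | ε / M' ≤ dist (g n ω) 0} := by
    intro ω hω
    simp only [Set.mem_setOf_eq, Set.mem_union, Real.dist_eq, sub_zero] at hω ⊢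
    by_contra hcon
    push_neg at hcon
    obtain ⟨h1, h2⟩ := hcon
    have hfb : |f n ω| ≤ M' := le_trans h1 (le_max_left _ _)
    have : |f n ω * g n ω| < ε := by
      rw [abs_mul]
      calc |f n ω| * |g n ω| ≤ M' * |g n ω| :=
            mul_le_mul_of_nonneg_right hfb (abs_nonneg _)
        _ < M' * (ε / M') := by
            exact mul_lt_mul_of_pos_left h2 hM'pos
        _ = ε := by field_simp
    exact absurd hω (not_le.2 this)
  calc P {ω | ε ≤ dist (f n ω * g n ω) 0}
      ≤ P {ω | M < |f n ω|} + P {ω | ε / M' ≤ dist (g n ω) 0} :=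
        (measure_mono hsub).trans (measure_union_le _ _)
    _ ≤ ENNReal.ofReal (η'.toReal / 2) + ENNReal.ofReal (η'.toReal / 2) := by
        gcongr
        · exact hN1 n (le_trans (le_max_left _ _) hn)
        · exact hN2 n (le_trans (le_max_right _ _) hn)
    _ ≤ η' := by
        rw [← ENNReal.ofReal_add (by positivity) (by positivity)]
        have : η'.toReal / 2 + η'.toReal / 2 = η'.toReal := by ring
        rw [this, ENNReal.ofReal_toReal hη'top]
    _ ≤ η := min_le_left _ _

lemma tim0_add {f g : ℕ → Ω → ℝ} (hf : TIM P f 0) (hg : TIM P g 0) :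
    TIM P (fun n ω => f n ω + g n ω) 0 := by
  intro ε hε
  refine tendsto_zero_of_le
    (v := fun n => P {ω | ε/2 ≤ dist (f n ω) 0} + P {ω | ε/2 ≤ dist (g n ω) 0})
    (Eventually.of_forall fun n => ?_) ?_
  · refine (measure_mono ?_).trans (measure_union_le _ _)
    intro ω hω
    simp only [Set.mem_setOf_eq, Set.mem_union, Real.dist_eq, sub_zero] at hω ⊢
    by_contra hcon
    push_neg at hcon
    have := abs_add_le (f n ω) (g n ω)
    have : |f n ω + g n ω| < ε := by
      calc |f n ω + g n ω| ≤ |f n ω| + |g n ω| := abs_add_le _ _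
        _ < ε/2 + ε/2 := add_lt_add hcon.1 hcon.2
        _ = ε := by ring
    exact absurd hω (not_le.2 this)
  · have h1 := hf (ε/2) (by positivity)
    have h2 := hg (ε/2) (by positivity)
    simpa using h1.add h2

lemma tim_sum_zero {ι : Type*} [Fintype ι] {X : ι → ℕ → Ω → ℝ}
    (h : ∀ i, TIM P (X i) 0) :
    TIM P (fun n ω => ∑ i, X i n ω) 0 := by
  classical
  have := tim_comp (P := P) (X := fun n ω i => X i n ω) (a := fun _ => 0)
    (f := fun x => ∑ i, x i) (fun i => h i)
    ((continuous_finset_sum _ fun i _ => continuous_apply i).continuousAt)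
  simpa using this

lemma tim_congr_ev {f g : ℕ → Ω → ℝ} {a : ℝ} (E : ℕ → Set Ω)
    (hE : Tendsto (fun n => P (E n)) atTop (𝓝 0))
    (hfg : ∀ᶠ n in atTop, ∀ ω, ω ∉ E n → f n ω = g n ω)
    (hg : TIM P g a) : TIM P f a := by
  intro ε hε
  refine tendsto_zero_of_le
    (v := fun n => P (E n) + P {ω | ε ≤ dist (g n ω) a})
    ?_ (by simpa using hE.add (hg ε hε))
  filter_upwards [hfg] with n hn
  refine (measure_mono ?_).trans (measure_union_le _ _)
  intro ω hω
  by_cases hmem : ω ∈ E n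
  · exact Set.mem_union_left _ hmem
  · refine Set.mem_union_right _ ?_
    simpa [hn ω hmem] using hω

/-- sets where a TIM sequence with nonzero limit vanishes have small probability -/
lemma tendsto_zero_set {f : ℕ → Ω → ℝ} {a : ℝ} (h : TIM P f a) (ha : a ≠ 0) :
    Tendsto (fun n => P {ω | f n ω = 0}) atTop (𝓝 0) := by
  refine tendsto_zero_of_le (Eventually.of_forall fun n => measure_mono ?_)
    (h |a| (abs_pos.mpr ha))
  intro ω hω
  simp only [Set.mem_setOf_eq] at hω ⊢
  simp [Real.dist_eq, hω]

lemma tim_comp1 {X : ℕ → Ω → ℝ} {a : ℝ} (hX : TIM P X a) {φ : ℝ → ℝ}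
    (hφ : ContinuousAt φ a) : TIM P (fun n ω => φ (X n ω)) (φ a) := by
  intro ε hε
  obtain ⟨δ, hδ, h⟩ := Metric.continuousAt_iff.mp hφ ε hε
  refine tendsto_zero_of_le (v := fun n => P {ω | δ ≤ dist (X n ω) a})
    (Eventually.of_forall fun n => measure_mono ?_) (hX δ hδ)
  intro ω hω
  simp only [Set.mem_setOf_eq] at hω ⊢
  by_contra hc
  exact absurd (h (not_le.mp hc)) (not_lt.2 hω)

lemma tim0_neg {f : ℕ → Ω → ℝ} (hf : TIM P f 0) : TIM P (fun n ω => -(f n ω)) 0 := by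
  intro ε hε
  simpa [dist_zero_right] using hf ε hε

lemma tim0_sub {f g : ℕ → Ω → ℝ} (hf : TIM P f 0) (hg : TIM P g 0) :
    TIM P (fun n ω => f n ω - g n ω) 0 := by
  have := tim0_add hf (tim0_neg hg)
  simpa [sub_eq_add_neg] using this

lemma tim0_mul_tight {f g : ℕ → Ω → ℝ} (hf : TIM P f 0) (hg : Tight P g) :
    TIM P (fun n ω => f n ω * g n ω) 0 := by
  have := tight_mul_tim0 hg hf
  exact tim_congr (fun n ω => mul_comm _ _) this

lemma sum_mulVec {ι n' m' : Type*} [Fintype ι] [Fintype n'] (M : ι → Matrix m' n' ℝ)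
    (v : n' → ℝ) : (∑ k, M k).mulVec v = ∑ k, (M k).mulVec v := by
  ext i
  simp only [Matrix.mulVec, dotProduct, Finset.sum_apply, Matrix.sum_apply,
    Finset.sum_mul]
  exact Finset.sum_comm

end GMetaAux

/-- **Asymptotic equivalence of GMeta and fixed-effect meta-analysis (equation (4) of
Tang, Kundu & Chatterjee).**  When all reduced models coincide with the maximal model, the
optimally weighted GMeta estimator `β̂_opt` and the fixed-effect meta-analysis estimator
`β̂_meta` satisfy `β̂_opt = β̂_meta + o_P(1/√n)`. -/
theorem gmeta_meta_asymptotic_equivalence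
    {Ω : Type} [MeasurableSpace Ω] (P : Measure Ω) [IsProbabilityMeasure P]
    (p K : ℕ) (hK : 1 ≤ K)
    (βstar : EuclideanSpace ℝ (Fin p))
    -- the study estimators
    (θhat : ℕ → Ω → Fin K → EuclideanSpace ℝ (Fin p))
    (hθmeas : ∀ n k, Measurable (fun ω => θhat n ω k))
    -- (i) study sample sizes with n_k/n → c_k > 0
    (nk : Fin K → ℕ → ℕ) (c : Fin K → ℝ) (hc : ∀ k, 0 < c k)
    (hnk : ∀ k, Tendsto (fun n => (nk k n : ℝ) / n) atTop (𝓝 (c k)))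
    -- (ii) √n (θ̂_{n,k} − β*) is bounded in probability (tight)
    (htight : ∀ k, ∀ ε : ℝ, 0 < ε → ∃ M : ℝ, ∀ᶠ n : ℕ in atTop,
      P {ω | M < ‖(Real.sqrt n) • (θhat n ω k - βstar)‖} ≤ ENNReal.ofReal ε)
    -- (iii) estimated covariance matrices converging in probability to a common invertible Σ
    (Shat : ℕ → Ω → Fin K → Matrix (Fin p) (Fin p) ℝ)
    (hShatmeas : ∀ n k i j, Measurable (fun ω => Shat n ω k i j))
    (Sig : Matrix (Fin p) (Fin p) ℝ) (hSig : IsUnit Sig)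
    (hShatconv : ∀ k i j,
      TendstoInMeasure P (fun n ω => Shat n ω k i j) atTop (fun _ => Sig i j))
    -- (iv) the optimally weighted GMeta estimator admits the expansion
    -- √n(β̂_opt − β*) = −M_n √n U_n(β*, θ̂_n), with M_n →P M and
    -- √n U_n(β*, θ̂_n) + (Σ⁻¹ √n(θ̂_{n,k} − β*))_k →P 0
    (βopt : ℕ → Ω → EuclideanSpace ℝ (Fin p))
    (hβoptmeas : ∀ n, Measurable (βopt n))
    (Mn : ℕ → Ω → Matrix (Fin p) (Fin K × Fin p) ℝ)
    (Zn : ℕ → Ω → (Fin K × Fin p → ℝ))   -- Zn = √n U_n(β*, θ̂_n)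
    (hexp : ∀ (n : ℕ) ω (j : Fin p),
      ((Real.sqrt n) • (βopt n ω - βstar)) j = -((Mn n ω).mulVec (Zn n ω) j))
    (hMn : ∀ (j : Fin p) (ki : Fin K × Fin p),
      TendstoInMeasure P (fun n ω => Mn n ω j ki) atTop
        (fun _ => (∑ k, c k)⁻¹ * (c ki.1 * Sig j ki.2)))
    (hZn : ∀ (k : Fin K) (i : Fin p),
      TendstoInMeasure P
        (fun (n : ℕ) ω => Zn n ω (k, i)
          + ∑ j, Sig⁻¹ i j * (Real.sqrt n * (θhat n ω k j - βstar j)))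
        atTop (fun _ => (0 : ℝ)))
    -- the fixed-effect meta-analysis estimator
    (βmeta : ℕ → Ω → EuclideanSpace ℝ (Fin p))
    (hβmeta : ∀ n ω (j : Fin p), βmeta n ω j =
      ((∑ k, ((nk k n : ℝ)⁻¹ • Shat n ω k)⁻¹)⁻¹).mulVec
        (∑ k, (((nk k n : ℝ)⁻¹ • Shat n ω k)⁻¹).mulVec (fun i => θhat n ω k i)) j) :
    TendstoInMeasure P
      (fun (n : ℕ) ω => (Real.sqrt n) • (βopt n ω - βmeta n ω))
      atTop (fun _ => (0 : EuclideanSpace ℝ (Fin p))) := by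
  classical
  have hKn : Nonempty (Fin K) := ⟨⟨0, hK⟩⟩
  have hcsum : 0 < ∑ k, c k := Finset.sum_pos (fun k _ => hc k) Finset.univ_nonempty
  have hSigdet : IsUnit Sig.det := (Matrix.isUnit_iff_isUnit_det Sig).mp hSig
  have hSigdet0 : Sig.det ≠ 0 := isUnit_iff_ne_zero.mp hSigdet
  have hSig1 : Sig * Sig⁻¹ = 1 := Matrix.mul_nonsing_inv Sig hSigdet
  have hSig1' : Sig⁻¹ * Sig = 1 := Matrix.nonsing_inv_mul Sig hSigdet
  set m : ℝ := (∑ k, c k)⁻¹ with hm_def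
  set A : Fin K → Fin p → ℕ → Ω → ℝ :=
    fun k j n ω => Real.sqrt n * (θhat n ω k j - βstar j) with hA_def
  set b : Fin K → ℕ → ℝ := fun k n => (nk k n : ℝ) / n with hb_def
  set D : ℕ → Ω → Matrix (Fin p) (Fin p) ℝ :=
    fun n ω => ∑ k, b k n • (Shat n ω k)⁻¹ with hD_def
  set Dinf : Matrix (Fin p) (Fin p) ℝ := ∑ k, c k • Sig⁻¹ with hDinf_def
  have hDinf_smul : Dinf = (∑ k, c k) • Sig⁻¹ := by
    rw [hDinf_def, Finset.sum_smul]
  have hDinfdet0 : Dinf.det ≠ 0 := by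
    rw [hDinf_smul, Matrix.det_smul, Matrix.det_nonsing_inv, Ring.inverse_eq_inv]
    exact mul_ne_zero (pow_ne_zero _ hcsum.ne') (inv_ne_zero hSigdet0)
  have hDinfdet : IsUnit Dinf.det := isUnit_iff_ne_zero.mpr hDinfdet0
  have hDinf_inv : Dinf⁻¹ = m • Sig := by
    rw [hDinf_smul]
    refine Matrix.inv_eq_right_inv ?_
    rw [Matrix.smul_mul, Matrix.mul_smul, smul_smul, hSig1', hm_def,
      mul_inv_cancel₀ hcsum.ne', one_smul]
  -- the key algebraic identity Σ Σ⁻¹ = 1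
  have hkey : ∀ (v : Fin K → Fin p → ℝ) (j : Fin p),
      (∑ k, ∑ i, ∑ j', m * (c k * (Sig j i * (Sig⁻¹ i j' * v k j'))))
        = m * ∑ k, c k * v k j := by
    intro v j
    rw [Finset.mul_sum]
    refine Finset.sum_congr rfl fun k _ => ?_
    rw [Finset.sum_comm]
    calc (∑ j', ∑ i, m * (c k * (Sig j i * (Sig⁻¹ i j' * v k j'))))
        = ∑ j', (∑ i, Sig j i * Sig⁻¹ i j') * (m * (c k * v k j')) := by
          refine Finset.sum_congr rfl fun j' _ => ?_
          rw [Finset.sum_mul]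
          exact Finset.sum_congr rfl fun i _ => by ring
      _ = ∑ j', (1 : Matrix (Fin p) (Fin p) ℝ) j j' * (m * (c k * v k j')) := by
          refine Finset.sum_congr rfl fun j' _ => ?_
          rw [← Matrix.mul_apply, hSig1]
      _ = m * (c k * v k j) := by
          simp [Matrix.one_apply, ite_mul, Finset.sum_ite_eq, Finset.mem_univ]
  -- coordinates are dominated by the norm
  have hcoord_le : ∀ (x : EuclideanSpace ℝ (Fin p)) (j : Fin p), |x j| ≤ ‖x‖ := by
    intro x j
    rw [EuclideanSpace.norm_eq]
    have h1 : |x j| = Real.sqrt (‖x j‖ ^ 2) := by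
      rw [Real.sqrt_sq (norm_nonneg _), Real.norm_eq_abs]
    rw [h1]
    exact Real.sqrt_le_sqrt (Finset.single_le_sum (f := fun i => ‖x i‖ ^ 2)
      (fun i _ => sq_nonneg _) (Finset.mem_univ j))
  have hA_tight : ∀ k j, GMetaAux.Tight P (A k j) := by
    intro k j ε hε
    obtain ⟨M, hM⟩ := htight k ε hε
    refine ⟨M, ?_⟩
    filter_upwards [hM] with n hn
    refine le_trans (measure_mono ?_) hn
    intro ω hω
    simp only [Set.mem_setOf_eq] at hω ⊢
    refine lt_of_lt_of_le hω ?_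
    have he : A k j n ω = ((Real.sqrt n) • (θhat n ω k - βstar)) j := by
      simp [hA_def, PiLp.smul_apply, PiLp.sub_apply, smul_eq_mul]
    rw [he]
    exact hcoord_le _ j
  ---------------------------------------------------------------
  -- STEP A : the GMeta side
  ---------------------------------------------------------------
  have hstepA : ∀ j : Fin p, GMetaAux.TIM P (fun n ω =>
      Real.sqrt n * (βopt n ω j - βstar j) - m * ∑ k, c k * A k j n ω) 0 := by
    intro j
    have hTIMg : GMetaAux.TIM P (fun n ω =>
        (∑ k, ∑ i, Mn n ω j (k, i) *
            (-(Zn n ω (k, i) + ∑ j', Sig⁻¹ i j' * A k j' n ω)))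
        + ∑ k, ∑ i, ∑ j',
            ((Mn n ω j (k, i) - m * (c k * Sig j i)) * Sig⁻¹ i j') * A k j' n ω) 0 := by
      apply GMetaAux.tim0_add
      · refine GMetaAux.tim_sum_zero fun k => ?_
        refine GMetaAux.tim_sum_zero fun i => ?_
        refine GMetaAux.tight_mul_tim0 (GMetaAux.tight_of_tim (tendstoInMeasure_iff_dist.mp (hMn j (k, i)))) ?_
        exact GMetaAux.tim0_neg (tendstoInMeasure_iff_dist.mp (hZn k i))
      · refine GMetaAux.tim_sum_zero fun k => ?_
        refine GMetaAux.tim_sum_zero fun i => ?_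
        refine GMetaAux.tim_sum_zero fun j' => ?_
        refine GMetaAux.tim0_mul_tight ?_ (hA_tight k j')
        have h1 := tendstoInMeasure_iff_dist.mp (hMn j (k, i))
        have h2 := GMetaAux.tim_comp1 (P := P) h1
          (φ := fun x => (x - m * (c k * Sig j i)) * Sig⁻¹ i j')
          (by fun_prop)
        simpa using h2
    refine GMetaAux.tim_congr (fun n ω => ?_) hTIMg
    have he := hexp n ω j
    simp only [PiLp.smul_apply, PiLp.sub_apply, smul_eq_mul] at he
    rw [he]
    rw [show ((Mn n ω).mulVec (Zn n ω)) j = ∑ k, ∑ i, Mn n ω j (k, i) * Zn n ω (k, i) from by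
      simp [Matrix.mulVec, dotProduct, Fintype.sum_prod_type]]
    have e1 : ∀ (k : Fin K) (i : Fin p),
        Mn n ω j (k, i) * (-(Zn n ω (k, i) + ∑ j', Sig⁻¹ i j' * A k j' n ω))
        = -(Mn n ω j (k, i) * Zn n ω (k, i))
          - ∑ j', Mn n ω j (k, i) * (Sig⁻¹ i j' * A k j' n ω) := by
      intro k i
      rw [mul_neg, mul_add, Finset.mul_sum, neg_add, sub_eq_add_neg]
    have e2 : ∀ (k : Fin K) (i : Fin p) (j' : Fin p),
        ((Mn n ω j (k, i) - m * (c k * Sig j i)) * Sig⁻¹ i j') * A k j' n ω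
        = Mn n ω j (k, i) * (Sig⁻¹ i j' * A k j' n ω)
          - m * (c k * (Sig j i * (Sig⁻¹ i j' * A k j' n ω))) := by
      intro k i j'; ring
    simp only [e1, e2, Finset.sum_add_distrib, Finset.sum_sub_distrib,
      Finset.sum_neg_distrib]
    rw [hkey (fun k j' => A k j' n ω) j]
    ring
  ---------------------------------------------------------------
  -- continuity infrastructure for STEP B
  ---------------------------------------------------------------
  have hinvR : ∀ x : ℝ, x ≠ 0 → ContinuousAt (Ring.inverse : ℝ → ℝ) x := by
    intro x hx
    rw [Ring.inverse_eq_inv']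
    exact continuousAt_inv₀ hx
  set XB : ℕ → Ω → ((Fin K × Fin p × Fin p) ⊕ Fin K) → ℝ :=
    fun n ω x => match x with
      | .inl q => Shat n ω q.1 q.2.1 q.2.2
      | .inr k => b k n with hXB_def
  set aB : ((Fin K × Fin p × Fin p) ⊕ Fin K) → ℝ :=
    fun x => match x with
      | .inl q => Sig q.2.1 q.2.2
      | .inr k => c k with haB_def
  have hXBtim : ∀ x, GMetaAux.TIM P (fun n ω => XB n ω x) (aB x) := by
    rintro (⟨k, i, j⟩ | k)
    · exact tendstoInMeasure_iff_dist.mp (hShatconv k i j)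
    · exact GMetaAux.tim_const (hnk k)
  set matB : Fin K → (((Fin K × Fin p × Fin p) ⊕ Fin K) → ℝ) → Matrix (Fin p) (Fin p) ℝ :=
    fun k x => Matrix.of fun i j => x (.inl (k, i, j)) with hmatB_def
  have hmatB_cont : ∀ k, Continuous (matB k) := by
    intro k
    exact continuous_pi fun i => continuous_pi fun j => continuous_apply _
  have hmatB_a : ∀ k, matB k aB = Sig := fun k => rfl
  set DfunB : (((Fin K × Fin p × Fin p) ⊕ Fin K) → ℝ) → Matrix (Fin p) (Fin p) ℝ :=
    fun x => ∑ k, x (.inr k) • (matB k x)⁻¹ with hDfunB_def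
  have hmatinv_cont : ∀ k, ContinuousAt (fun x => (matB k x)⁻¹) aB := by
    intro k
    refine ContinuousAt.comp ?_ (hmatB_cont k).continuousAt
    rw [hmatB_a]
    exact continuousAt_matrix_inv Sig (hinvR _ hSigdet0)
  have hDfun_cont : ContinuousAt DfunB aB := by
    have h1 : ∀ k : Fin K, ContinuousAt (fun x => x (.inr k) • (matB k x)⁻¹) aB :=
      fun k => ((continuous_apply _).continuousAt).smul (hmatinv_cont k)
    exact tendsto_finset_sum _ fun k _ => h1 k
  have hDfunB_a : DfunB aB = Dinf := rfl
  have hDinv_cont : ContinuousAt (fun x => (DfunB x)⁻¹) aB := by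
    refine ContinuousAt.comp ?_ hDfun_cont
    rw [hDfunB_a]
    exact continuousAt_matrix_inv Dinf (hinvR _ hDinfdet0)
  have hDeq : ∀ n ω, DfunB (XB n ω) = D n ω := fun n ω => rfl
  -- convergence of the determinants
  have hdetS : ∀ k, GMetaAux.TIM P (fun n ω => (Shat n ω k).det) Sig.det := by
    intro k
    have h := GMetaAux.tim_comp (P := P) hXBtim
      (f := fun x => (matB k x).det) ((hmatB_cont k).matrix_det.continuousAt)
    exact GMetaAux.tim_congr (fun n ω => rfl) h
  have hdetD : GMetaAux.TIM P (fun n ω => (D n ω).det) Dinf.det := by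
    have h := GMetaAux.tim_comp (P := P) hXBtim
      (f := fun x => (DfunB x).det)
      (((continuous_id.matrix_det).continuousAt).comp hDfun_cont)
    exact GMetaAux.tim_congr (fun n ω => rfl) h
  have hQ : ∀ (j i : Fin p) (k : Fin K) (j' : Fin p),
      GMetaAux.TIM P (fun n ω => (D n ω)⁻¹ j i * (b k n * ((Shat n ω k)⁻¹ i j')))
        (m * (c k * (Sig j i * Sig⁻¹ i j'))) := by
    intro j i k j'
    have hev2 : ∀ (i' j'' : Fin p), Continuous (fun M : Matrix (Fin p) (Fin p) ℝ => M i' j'') :=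
      fun i' j'' => (continuous_apply j'').comp (continuous_apply i')
    have hcont : ContinuousAt
        (fun x => (DfunB x)⁻¹ j i * (x (.inr k) * ((matB k x)⁻¹ i j'))) aB := by
      refine ContinuousAt.mul ?_ (ContinuousAt.mul ?_ ?_)
      · exact ((hev2 j i).continuousAt).comp hDinv_cont
      · exact (continuous_apply _).continuousAt
      · exact ((hev2 i j').continuousAt).comp (hmatinv_cont k)
    have h := GMetaAux.tim_comp (P := P) hXBtim
      (f := fun x => (DfunB x)⁻¹ j i * (x (.inr k) * ((matB k x)⁻¹ i j'))) hcont
    have hval : (DfunB aB)⁻¹ j i * (aB (.inr k) * ((matB k aB)⁻¹ i j'))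
        = m * (c k * (Sig j i * Sig⁻¹ i j')) := by
      rw [hDfunB_a, hDinf_inv, hmatB_a, show aB (Sum.inr k) = c k from rfl]
      simp only [Matrix.smul_apply, smul_eq_mul]
      ring
    exact GMetaAux.tim_congr (fun n ω => rfl) (GMetaAux.tim_of_eq h hval)
  ---------------------------------------------------------------
  -- the good events
  ---------------------------------------------------------------
  set E : ℕ → Set Ω :=
    fun n => {ω | ¬ ((∀ k, (Shat n ω k).det ≠ 0) ∧ (D n ω).det ≠ 0)} with hE_def
  have hE : Tendsto (fun n => P (E n)) atTop (𝓝 0) := by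
    refine GMetaAux.tendsto_zero_of_le
      (v := fun n => (∑ k, P {ω | (Shat n ω k).det = 0}) + P {ω | (D n ω).det = 0})
      (Eventually.of_forall fun n => ?_) ?_
    · have hsub : E n ⊆ (⋃ k, {ω | (Shat n ω k).det = 0}) ∪ {ω | (D n ω).det = 0} := by
        intro ω hω
        rw [hE_def] at hω
        simp only [Set.mem_setOf_eq, not_and_or, not_forall, not_not] at hω
        rcases hω with ⟨k, hk⟩ | hD'
        · exact Set.mem_union_left _ (Set.mem_iUnion.mpr ⟨k, hk⟩)
        · exact Set.mem_union_right _ hD'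
      calc P (E n) ≤ P ((⋃ k, {ω | (Shat n ω k).det = 0}) ∪ {ω | (D n ω).det = 0}) :=
            measure_mono hsub
        _ ≤ P (⋃ k, {ω | (Shat n ω k).det = 0}) + P {ω | (D n ω).det = 0} :=
            measure_union_le _ _
        _ ≤ (∑ k, P {ω | (Shat n ω k).det = 0}) + P {ω | (D n ω).det = 0} := by
            gcongr
            exact measure_iUnion_fintype_le P _
    · have h1 : Tendsto (fun n => ∑ k, P {ω | (Shat n ω k).det = 0}) atTop
          (𝓝 (∑ _k : Fin K, (0 : ℝ≥0∞))) :=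
        tendsto_finset_sum _ fun k _ => GMetaAux.tendsto_zero_set (hdetS k) hSigdet0
      have h2 := GMetaAux.tendsto_zero_set hdetD hDinfdet0
      have := h1.add h2
      simpa using this
  have hev_pos : ∀ᶠ n : ℕ in atTop, 0 < n ∧ ∀ k, 0 < nk k n := by
    have h1 : ∀ k, ∀ᶠ n : ℕ in atTop, 0 < (nk k n : ℝ) / n :=
      fun k => (hnk k).eventually (eventually_gt_nhds (hc k))
    have h2 : ∀ᶠ n : ℕ in atTop, ∀ k, 0 < (nk k n : ℝ) / n := eventually_all.mpr h1
    filter_upwards [h2, eventually_gt_atTop 0] with n hn hn0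
    refine ⟨hn0, fun k => ?_⟩
    rcases Nat.eq_zero_or_pos (nk k n) with h | h
    · exfalso
      have := hn k
      rw [h] at this
      simp at this
    · exact h
  ---------------------------------------------------------------
  -- STEP B : the meta-analysis side
  ---------------------------------------------------------------
  have hstepB : ∀ j : Fin p, GMetaAux.TIM P (fun n ω =>
      Real.sqrt n * (βmeta n ω j - βstar j) - m * ∑ k, c k * A k j n ω) 0 := by
    intro j
    -- limit expression, with the key identity applied
    have hTIMH : GMetaAux.TIM P (fun n ω =>
        (∑ i, ∑ k, ∑ j', ((D n ω)⁻¹ j i * (b k n * ((Shat n ω k)⁻¹ i j'))) * A k j' n ω)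
          - m * ∑ k, c k * A k j n ω) 0 := by
      have hTIMcore : GMetaAux.TIM P (fun n ω =>
          ∑ i, ∑ k, ∑ j', ((D n ω)⁻¹ j i * (b k n * ((Shat n ω k)⁻¹ i j'))
            - m * (c k * (Sig j i * Sig⁻¹ i j'))) * A k j' n ω) 0 := by
        refine GMetaAux.tim_sum_zero fun i => ?_
        refine GMetaAux.tim_sum_zero fun k => ?_
        refine GMetaAux.tim_sum_zero fun j' => ?_
        refine GMetaAux.tim0_mul_tight ?_ (hA_tight k j')
        have h2 := GMetaAux.tim_comp1 (P := P) (hQ j i k j')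
          (φ := fun x => x - m * (c k * (Sig j i * Sig⁻¹ i j')))
          (by fun_prop)
        simpa using h2
      refine GMetaAux.tim_congr (fun n ω => ?_) hTIMcore
      have e3 : ∀ (i : Fin p) (k : Fin K) (j' : Fin p),
          ((D n ω)⁻¹ j i * (b k n * ((Shat n ω k)⁻¹ i j'))
            - m * (c k * (Sig j i * Sig⁻¹ i j'))) * A k j' n ω
          = ((D n ω)⁻¹ j i * (b k n * ((Shat n ω k)⁻¹ i j'))) * A k j' n ω
            - m * (c k * (Sig j i * (Sig⁻¹ i j' * A k j' n ω))) := by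
        intro i k j'; ring
      simp only [e3, Finset.sum_sub_distrib]
      rw [show (∑ i, ∑ k, ∑ j', m * (c k * (Sig j i * (Sig⁻¹ i j' * A k j' n ω))))
          = m * ∑ k, c k * A k j n ω from by
        rw [Finset.sum_comm]; exact hkey (fun k j' => A k j' n ω) j]
    -- identification on the good event
    refine GMetaAux.tim_congr_ev E hE ?_ hTIMH
    filter_upwards [hev_pos] with n hn ω hω
    obtain ⟨hn0, hnk0⟩ := hn
    rw [hE_def] at hω
    simp only [Set.mem_setOf_eq, not_not] at hω
    obtain ⟨hdS, hdD⟩ := hω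
    have hdSu : ∀ k, IsUnit (Shat n ω k).det := fun k => isUnit_iff_ne_zero.mpr (hdS k)
    have hdDu : IsUnit (D n ω).det := isUnit_iff_ne_zero.mpr hdD
    have hnR : ((n : ℕ) : ℝ) ≠ 0 := Nat.cast_ne_zero.mpr hn0.ne'
    have hnkR : ∀ k, ((nk k n : ℕ) : ℝ) ≠ 0 := fun k => Nat.cast_ne_zero.mpr (hnk0 k).ne'
    have hDnω : D n ω = ∑ k, b k n • (Shat n ω k)⁻¹ := rfl
    have h1 : ∀ k, ((nk k n : ℝ)⁻¹ • Shat n ω k)⁻¹ = (nk k n : ℝ) • (Shat n ω k)⁻¹ := by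
      intro k
      refine Matrix.inv_eq_right_inv ?_
      rw [Matrix.smul_mul, Matrix.mul_smul, smul_smul, inv_mul_cancel₀ (hnkR k), one_smul,
        Matrix.mul_nonsing_inv _ (hdSu k)]
    have hfrac : ∀ k, (nk k n : ℝ) = (n : ℝ) * b k n := by
      intro k
      rw [hb_def]
      field_simp
    have h2 : (∑ k, ((nk k n : ℝ)⁻¹ • Shat n ω k)⁻¹) = (n : ℝ) • D n ω := by
      calc (∑ k, ((nk k n : ℝ)⁻¹ • Shat n ω k)⁻¹)
          = ∑ k, ((n : ℝ) * b k n) • (Shat n ω k)⁻¹ := by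
            refine Finset.sum_congr rfl fun k _ => ?_
            rw [h1 k, ← hfrac k]
        _ = (n : ℝ) • ∑ k, b k n • (Shat n ω k)⁻¹ := by
            rw [Finset.smul_sum]
            exact Finset.sum_congr rfl fun k _ => (mul_smul _ _ _)
        _ = (n : ℝ) • D n ω := by rw [← hDnω]
    have h3 : ((n : ℝ) • D n ω)⁻¹ = (n : ℝ)⁻¹ • (D n ω)⁻¹ := by
      refine Matrix.inv_eq_right_inv ?_
      rw [Matrix.smul_mul, Matrix.mul_smul, smul_smul, mul_inv_cancel₀ hnR, one_smul,
        Matrix.mul_nonsing_inv _ hdDu]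
    -- the main identity for βmeta
    have hmetaMain : βmeta n ω j - βstar j
        = ((D n ω)⁻¹.mulVec
            (∑ k, b k n • ((Shat n ω k)⁻¹.mulVec (fun i => θhat n ω k i - βstar i)))) j := by
      rw [hβmeta n ω j, h2, h3]
      have h4 : (∑ k, (((nk k n : ℝ)⁻¹ • Shat n ω k)⁻¹).mulVec (fun i => θhat n ω k i))
          = (n : ℝ) • ∑ k, b k n • ((Shat n ω k)⁻¹.mulVec (fun i => θhat n ω k i)) := by
        rw [Finset.smul_sum]
        refine Finset.sum_congr rfl fun k _ => ?_
        rw [h1 k, Matrix.smul_mulVec, hfrac k, mul_smul]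
      rw [h4, Matrix.mulVec_smul, Matrix.smul_mulVec, smul_smul,
        mul_inv_cancel₀ hnR, one_smul]
      have h5 : (∑ k, b k n • ((Shat n ω k)⁻¹.mulVec (fun i => θhat n ω k i)))
          = (∑ k, b k n • ((Shat n ω k)⁻¹.mulVec (fun i => θhat n ω k i - βstar i)))
            + (D n ω).mulVec (fun i => βstar i) := by
        rw [hDnω, GMetaAux.sum_mulVec, ← Finset.sum_add_distrib]
        refine Finset.sum_congr rfl fun k _ => ?_
        rw [Matrix.smul_mulVec (b k n), ← smul_add, ← Matrix.mulVec_add,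
          show ((fun i => θhat n ω k i - βstar i) + fun i => βstar i)
              = (fun i => θhat n ω k i) from by funext i; simp]
      rw [h5, Matrix.mulVec_add, Matrix.mulVec_mulVec, Matrix.nonsing_inv_mul _ hdDu,
        Matrix.one_mulVec]
      simp
    rw [hmetaMain]
    simp only [hA_def, Matrix.mulVec, dotProduct, Finset.sum_apply,
      Pi.smul_apply, smul_eq_mul, Finset.mul_sum]
    refine congrArg₂ (· - ·) ?_ rfl
    refine Finset.sum_congr rfl fun i _ => Finset.sum_congr rfl fun k _ =>
      Finset.sum_congr rfl fun j' _ => by ring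
  ---------------------------------------------------------------
  -- conclusion
  ---------------------------------------------------------------
  have hcoord : ∀ j : Fin p, GMetaAux.TIM P
      (fun n ω => Real.sqrt n * (βopt n ω j - βmeta n ω j)) 0 := by
    intro j
    have h := GMetaAux.tim0_sub (hstepA j) (hstepB j)
    refine GMetaAux.tim_congr (fun n ω => ?_) h
    ring
  rw [tendstoInMeasure_iff_dist]
  intro ε hε
  have hε' : 0 < ε / (p + 1) := by positivity
  refine GMetaAux.tendsto_zero_of_le
    (v := fun n => ∑ j : Fin p,
      P {ω | ε / (p + 1) ≤ dist (Real.sqrt n * (βopt n ω j - βmeta n ω j)) 0})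
    (Eventually.of_forall fun n => ?_) ?_
  · refine le_trans (measure_mono ?_) (measure_iUnion_fintype_le P _)
    intro ω hω
    simp only [Set.mem_setOf_eq, Set.mem_iUnion] at hω ⊢
    by_contra hcon
    push_neg at hcon
    set V : EuclideanSpace ℝ (Fin p) := (Real.sqrt n) • (βopt n ω - βmeta n ω) with hV_def
    have hVj : ∀ j : Fin p, V j = Real.sqrt n * (βopt n ω j - βmeta n ω j) := by
      intro j
      simp [hV_def, PiLp.smul_apply, PiLp.sub_apply, smul_eq_mul]
    have hle1 : ‖V‖ ≤ ∑ j, ‖V j‖ := by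
      rw [EuclideanSpace.norm_eq]
      calc Real.sqrt (∑ j, ‖V j‖ ^ 2) ≤ Real.sqrt ((∑ j, ‖V j‖) ^ 2) :=
            Real.sqrt_le_sqrt (Finset.sum_sq_le_sq_sum_of_nonneg fun j _ => norm_nonneg _)
        _ = ∑ j, ‖V j‖ := Real.sqrt_sq (Finset.sum_nonneg fun j _ => norm_nonneg _)
    have hsml : ∀ j : Fin p, ‖V j‖ ≤ ε / (p + 1) := by
      intro j
      have := hcon j
      rw [Real.dist_eq, sub_zero] at this
      rw [hVj j]
      exact le_of_lt this
    have hfin : ‖V‖ < ε := by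
      calc ‖V‖ ≤ ∑ j, ‖V j‖ := hle1
        _ ≤ ∑ _j : Fin p, ε / (p + 1) := Finset.sum_le_sum fun j _ => hsml j
        _ = (p : ℝ) * (ε / (p + 1)) := by
            rw [Finset.sum_const, Finset.card_univ, Fintype.card_fin, nsmul_eq_mul]
        _ < ((p : ℝ) + 1) * (ε / (p + 1)) := by
            exact mul_lt_mul_of_pos_right (by linarith) hε'
        _ = ε := by field_simp
    rw [dist_zero_right] at hω
    exact absurd hω (not_le.mpr hfin)
  · have h := tendsto_finset_sum (Finset.univ : Finset (Fin p))
      (fun j _ => hcoord j (ε / (p + 1)) hε')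
    simpa using h
end

section
/- (Expansion of the fixed-effect meta-analysis estimator; equation (10) of the Supplement.) Suppose θ̂_{n,1},…,θ̂_{n,K} are random vectors in ℝ^p, Σ̂_{n,1},…,Σ̂_{n,K} are random p×p matrices converging in probability to a common invertible matrix Σ, n_k/n → c_k > 0 for each k, and √n(θ̂_{n,k} − β*) is bounded in probability for each k. Then the fixed-effect meta-analysis estimator β̂_meta = (Σ_{k=1}^K (Σ̂_{n,k}/n_k)^{-1})^{-1} Σ_{k=1}^K (Σ̂_{n,k}/n_k)^{-1} θ̂_{n,k} satisfies √n(β̂_meta − β*) − (Σ_{k=1}^K c_k)^{-1} Σ_{k=1}^K c_k √n(θ̂_{n,k} − β*) → 0 in probability. -/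
open MeasureTheory ProbabilityTheory Filter Topology Matrix



section AuxMeta

variable {Ω : Type} [MeasurableSpace Ω] {P : Measure Ω}

lemma meta_tendstoInMeasure_comp {E F : Type*} [PseudoMetricSpace E] [PseudoMetricSpace F]
    {f : ℕ → Ω → E} {a : E} (hf : TendstoInMeasure P f atTop (fun _ => a))
    {g : E → F} (hg : ContinuousAt g a) :
    TendstoInMeasure P (fun n ω => g (f n ω)) atTop (fun _ => g a) := by
  simp only [tendstoInMeasure_iff_dist] at hf ⊢
  intro ε hε
  obtain ⟨δ, hδ, himp⟩ := Metric.continuousAt_iff.1 hg ε hε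
  refine tendsto_of_tendsto_of_tendsto_of_le_of_le tendsto_const_nhds (hf δ hδ)
    (fun n => zero_le) (fun n => measure_mono ?_)
  intro ω hω
  simp only [Set.mem_setOf_eq] at *
  by_contra hc
  push_neg at hc
  exact absurd hω (not_le.2 (himp hc))

lemma meta_tendstoInMeasure_pi {ι : Type*} [Fintype ι] {E : Type*} [PseudoMetricSpace E]
    {f : ℕ → Ω → ι → E} {a : ι → E}
    (hf : ∀ i, TendstoInMeasure P (fun n ω => f n ω i) atTop (fun _ => a i)) :
    TendstoInMeasure P f atTop (fun _ => a) := by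
  simp only [tendstoInMeasure_iff_dist] at hf ⊢
  intro ε hε
  have hsub : ∀ n, {ω | ε ≤ dist (f n ω) a} ⊆ ⋃ i, {ω | ε ≤ dist (f n ω i) (a i)} := by
    intro n ω hω
    by_contra hc
    simp only [Set.mem_iUnion, Set.mem_setOf_eq, not_exists, not_le] at hc
    exact absurd ((dist_pi_lt_iff hε).2 hc) (not_lt.2 hω)
  have hb : ∀ n, P {ω | ε ≤ dist (f n ω) a} ≤ ∑ i, P {ω | ε ≤ dist (f n ω i) (a i)} := by
    intro n
    refine (measure_mono (hsub n)).trans ((measure_iUnion_le _).trans_eq (tsum_fintype _))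
  refine tendsto_of_tendsto_of_tendsto_of_le_of_le tendsto_const_nhds ?_
    (fun n => zero_le) hb
  have := tendsto_finset_sum (Finset.univ : Finset ι)
    (fun i _ => hf i ε hε)
  simpa using this

lemma meta_tendstoInMeasure_prod {E F : Type*} [PseudoMetricSpace E] [PseudoMetricSpace F]
    {f : ℕ → Ω → E} {a : E} {g : ℕ → Ω → F} {b : F}
    (hf : TendstoInMeasure P f atTop (fun _ => a))
    (hg : TendstoInMeasure P g atTop (fun _ => b)) :
    TendstoInMeasure P (fun n ω => (f n ω, g n ω)) atTop (fun _ => (a, b)) := by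
  simp only [tendstoInMeasure_iff_dist] at hf hg ⊢
  intro ε hε
  have hsub : ∀ n, {ω | ε ≤ dist (f n ω, g n ω) (a, b)} ⊆
      {ω | ε ≤ dist (f n ω) a} ∪ {ω | ε ≤ dist (g n ω) b} := by
    intro n ω hω
    simp only [Set.mem_setOf_eq, Prod.dist_eq] at hω
    by_contra hc
    simp only [Set.mem_union, Set.mem_setOf_eq, not_or, not_le] at hc
    exact absurd hω (not_le.2 (max_lt hc.1 hc.2))
  have hb : ∀ n, P {ω | ε ≤ dist (f n ω, g n ω) (a, b)} ≤
      P {ω | ε ≤ dist (f n ω) a} + P {ω | ε ≤ dist (g n ω) b} :=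
    fun n => (measure_mono (hsub n)).trans (measure_union_le _ _)
  refine tendsto_of_tendsto_of_tendsto_of_le_of_le tendsto_const_nhds ?_
    (fun n => zero_le) hb
  simpa using Tendsto.add (hf ε hε) (hg ε hε)

lemma meta_tendstoInMeasure_const {E : Type*} [PseudoMetricSpace E]
    [IsProbabilityMeasure P] {r : ℕ → E} {a : E} (h : Tendsto r atTop (𝓝 a)) :
    TendstoInMeasure P (fun n _ => r n) atTop (fun _ => a) := by
  rw [tendstoInMeasure_iff_dist]
  intro ε hε
  have hev : ∀ᶠ n in atTop, P {ω : Ω | ε ≤ dist (r n) a} = 0 := by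
    filter_upwards [Metric.tendsto_nhds.1 h ε hε] with n hn
    have : {ω : Ω | ε ≤ dist (r n) a} = ∅ := by
      ext ω; simp only [Set.mem_setOf_eq, Set.mem_empty_iff_false, iff_false, not_le]; exact hn
    rw [this, measure_empty]
  exact Tendsto.congr' (hev.mono fun n hn => hn.symm) tendsto_const_nhds

lemma meta_norm_mulVec_le {p : ℕ} (M : Matrix (Fin p) (Fin p) ℝ) (x y : EuclideanSpace ℝ (Fin p))
    (hy : ∀ i, y i = ∑ j, M i j * x j) : ‖y‖ ≤ (∑ i, ∑ j, |M i j|) * ‖x‖ := by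
  have hxj : ∀ j, |x j| ≤ ‖x‖ := by
    intro j
    rw [EuclideanSpace.norm_eq]
    calc |x j| = Real.sqrt ((x j) ^ 2) := (Real.sqrt_sq_eq_abs _).symm
      _ ≤ Real.sqrt (∑ i, ‖x i‖ ^ 2) := by
          refine Real.sqrt_le_sqrt ?_
          have : (x j) ^ 2 = ‖x j‖ ^ 2 := by rw [Real.norm_eq_abs, sq_abs]
          rw [this]
          exact Finset.single_le_sum (f := fun i => ‖x i‖ ^ 2) (fun i _ => sq_nonneg _)
            (Finset.mem_univ j)
  have h1 : ‖y‖ ≤ ∑ i, |y i| := by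
    rw [EuclideanSpace.norm_eq]
    have h2 : ∑ i, ‖y i‖ ^ 2 ≤ (∑ i, |y i|) ^ 2 := by
      rw [sq, Finset.sum_mul]
      refine Finset.sum_le_sum fun i _ => ?_
      have hle : |y i| ≤ ∑ i', |y i'| :=
        Finset.single_le_sum (f := fun i' => |y i'|) (fun i' _ => abs_nonneg _)
          (Finset.mem_univ i)
      calc ‖y i‖ ^ 2 = |y i| * |y i| := by rw [Real.norm_eq_abs, sq]
        _ ≤ |y i| * ∑ i', |y i'| := mul_le_mul_of_nonneg_left hle (abs_nonneg _)
    calc Real.sqrt (∑ i, ‖y i‖ ^ 2) ≤ Real.sqrt ((∑ i, |y i|) ^ 2) := Real.sqrt_le_sqrt h2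
      _ = ∑ i, |y i| := Real.sqrt_sq (Finset.sum_nonneg fun i _ => abs_nonneg (y i))
  have h3 : ∀ i, |y i| ≤ (∑ j, |M i j|) * ‖x‖ := by
    intro i
    rw [hy i]
    calc |∑ j, M i j * x j| ≤ ∑ j, |M i j * x j| := Finset.abs_sum_le_sum_abs _ _
      _ ≤ ∑ j, |M i j| * ‖x‖ := Finset.sum_le_sum fun j _ => by
          rw [abs_mul]
          exact mul_le_mul_of_nonneg_left (hxj j) (abs_nonneg _)
      _ = (∑ j, |M i j|) * ‖x‖ := (Finset.sum_mul _ _ _).symm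
  calc ‖y‖ ≤ ∑ i, |y i| := h1
    _ ≤ ∑ i, (∑ j, |M i j|) * ‖x‖ := Finset.sum_le_sum fun i _ => h3 i
    _ = (∑ i, ∑ j, |M i j|) * ‖x‖ := (Finset.sum_mul _ _ _).symm

lemma meta_exists_ofReal_le {γ : ENNReal} (h : 0 < γ) :
    ∃ ε0 : ℝ, 0 < ε0 ∧ ENNReal.ofReal ε0 ≤ γ := by
  rcases eq_top_or_lt_top γ with h1 | h1
  · exact ⟨1, one_pos, h1 ▸ le_top⟩
  · exact ⟨γ.toReal, ENNReal.toReal_pos h.ne' h1.ne,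
      le_of_eq (ENNReal.ofReal_toReal h1.ne)⟩

lemma meta_sum_mulVec {p K : ℕ} (B : Fin K → Matrix (Fin p) (Fin p) ℝ) (v : Fin p → ℝ) :
    (∑ k, B k) *ᵥ v = ∑ k, B k *ᵥ v := by
  ext i
  simp only [Matrix.mulVec, dotProduct, Matrix.sum_apply, Finset.sum_mul,
    Finset.sum_apply]
  rw [Finset.sum_comm]

end AuxMeta

noncomputable def metaT (K p : ℕ) (x : (Fin K → ℝ) × (Fin K → Fin p → Fin p → ℝ)) :
    Matrix (Fin p) (Fin p) ℝ := ∑ k, x.1 k • (Matrix.of (x.2 k))⁻¹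

noncomputable def metaG (K p : ℕ) (x : (Fin K → ℝ) × (Fin K → Fin p → Fin p → ℝ)) :
    Fin K → Fin p → Fin p → ℝ :=
  fun k i j => ((metaT K p x)⁻¹ * (x.1 k • (Matrix.of (x.2 k))⁻¹)) i j

def toEuc {p : ℕ} (v : Fin p → ℝ) : EuclideanSpace ℝ (Fin p) := WithLp.toLp 2 v

lemma toEuc_apply {p : ℕ} (v : Fin p → ℝ) (i : Fin p) : toEuc v i = v i := rfl

lemma metaT_at {K p : ℕ} (c : Fin K → ℝ) (Sig : Matrix (Fin p) (Fin p) ℝ) :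
    metaT K p (c, fun _ i j => Sig i j) = (∑ k, c k) • Sig⁻¹ := by
  show ∑ k, c k • Sig⁻¹ = (∑ k, c k) • Sig⁻¹
  rw [Finset.sum_smul]

lemma metaG_at {K p : ℕ} (c : Fin K → ℝ) (Sig : Matrix (Fin p) (Fin p) ℝ)
    (hdet : IsUnit Sig.det) (hsc : (∑ k, c k) ≠ 0) (k : Fin K) :
    Matrix.of (metaG K p (c, fun _ i j => Sig i j) k)
      = ((∑ k', c k')⁻¹ * c k) • (1 : Matrix (Fin p) (Fin p) ℝ) := by
  have hTainv : (metaT K p (c, fun _ i j => Sig i j))⁻¹ = (∑ k', c k')⁻¹ • Sig :=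
    Matrix.inv_eq_right_inv (by
      rw [metaT_at, Matrix.smul_mul, Matrix.mul_smul, smul_smul,
        Matrix.nonsing_inv_mul _ hdet, mul_inv_cancel₀ hsc, one_smul])
  have h0 : Matrix.of (metaG K p (c, fun _ i j => Sig i j) k)
      = (metaT K p (c, fun _ i j => Sig i j))⁻¹ * (c k • Sig⁻¹) := rfl
  rw [h0, hTainv, Matrix.mul_smul, Matrix.smul_mul, Matrix.mul_nonsing_inv _ hdet,
    smul_smul, mul_comm]

lemma metaInv_contAt {K p : ℕ} (c : Fin K → ℝ) (Sig : Matrix (Fin p) (Fin p) ℝ)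
    (hdet : Sig.det ≠ 0) (k : Fin K) :
    ContinuousAt (fun x : (Fin K → ℝ) × (Fin K → Fin p → Fin p → ℝ) =>
      (Matrix.of (x.2 k))⁻¹) ((c, fun _ i j => Sig i j)) := by
  set a : (Fin K → ℝ) × (Fin K → Fin p → Fin p → ℝ) := (c, fun _ i j => Sig i j) with ha
  have h1 : Continuous (fun x : (Fin K → ℝ) × (Fin K → Fin p → Fin p → ℝ) =>
      Matrix.of (x.2 k)) := (continuous_apply k).comp continuous_snd
  have h2 : ContinuousAt Inv.inv (Matrix.of (a.2 k)) := by
    apply continuousAt_matrix_inv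
    have he : Matrix.of (a.2 k) = Sig := rfl
    rw [he, Ring.inverse_eq_inv']
    exact continuousAt_inv₀ hdet
  exact Tendsto.comp h2 h1.continuousAt

lemma metaT_contAt {K p : ℕ} (c : Fin K → ℝ) (Sig : Matrix (Fin p) (Fin p) ℝ)
    (hdet : Sig.det ≠ 0) :
    ContinuousAt (metaT K p) ((c, fun _ i j => Sig i j) :
      (Fin K → ℝ) × (Fin K → Fin p → Fin p → ℝ)) := by
  have : ∀ k : Fin K, ContinuousAt (fun x : (Fin K → ℝ) × (Fin K → Fin p → Fin p → ℝ) =>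
      x.1 k • (Matrix.of (x.2 k))⁻¹) ((c, fun _ i j => Sig i j)) :=
    fun k => (((continuous_apply k).comp continuous_fst).continuousAt).smul
      (metaInv_contAt c Sig hdet k)
  exact tendsto_finset_sum _ (fun k _ => this k)

lemma metaG_contAt {K p : ℕ} (c : Fin K → ℝ) (Sig : Matrix (Fin p) (Fin p) ℝ)
    (hdet : Sig.det ≠ 0) (hTdet : (metaT K p (c, fun _ i j => Sig i j)).det ≠ 0) :
    ContinuousAt (metaG K p) (c, fun _ i j => Sig i j) := by
  set a : (Fin K → ℝ) × (Fin K → Fin p → Fin p → ℝ) := (c, fun _ i j => Sig i j) with ha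
  have hinv : ∀ k : Fin K,
      ContinuousAt (fun x : (Fin K → ℝ) × (Fin K → Fin p → Fin p → ℝ) =>
        (Matrix.of (x.2 k))⁻¹) a := metaInv_contAt c Sig hdet
  have hT : ContinuousAt (metaT K p) a := metaT_contAt c Sig hdet
  have hTinv : ContinuousAt (fun x => (metaT K p x)⁻¹) a := by
    have h2 : ContinuousAt Inv.inv (metaT K p a) := by
      apply continuousAt_matrix_inv
      rw [Ring.inverse_eq_inv']
      exact continuousAt_inv₀ hTdet
    exact Tendsto.comp h2 hT
  apply continuousAt_pi.2; intro k
  apply continuousAt_pi.2; intro i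
  apply continuousAt_pi.2; intro j
  have hmul : ContinuousAt (fun x : (Fin K → ℝ) × (Fin K → Fin p → Fin p → ℝ) =>
      (metaT K p x)⁻¹ * (x.1 k • (Matrix.of (x.2 k))⁻¹)) a :=
    hTinv.mul ((((continuous_apply k).comp continuous_fst).continuousAt).smul (hinv k))
  show ContinuousAt (fun x : (Fin K → ℝ) × (Fin K → Fin p → Fin p → ℝ) =>
      ((metaT K p x)⁻¹ * (x.1 k • (Matrix.of (x.2 k))⁻¹)) i j) a
  exact continuousAt_pi.1 (continuousAt_pi.1 hmul i) j

lemma meta_sum_mulVec' {p K : ℕ} (B : Fin K → Matrix (Fin p) (Fin p) ℝ) (v : Fin p → ℝ) :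
    (∑ k, B k) *ᵥ v = ∑ k, B k *ᵥ v := by
  ext i
  simp only [Matrix.mulVec, dotProduct, Matrix.sum_apply, Finset.sum_mul,
    Finset.sum_apply]
  rw [Finset.sum_comm]

lemma meta_algebra {p K : ℕ} (n : ℕ) (hn : (n : ℝ) ≠ 0) (r : Fin K → ℝ)
    (S : Fin K → Matrix (Fin p) (Fin p) ℝ) (nkv : Fin K → ℕ)
    (hr : ∀ k, r k = (nkv k : ℝ) / n) (hrne : ∀ k, r k ≠ 0)
    (hSdet : ∀ k, IsUnit (S k).det)
    (hTdet : IsUnit (∑ k, r k • (S k)⁻¹).det)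
    (θ : Fin K → Fin p → ℝ) (β : Fin p → ℝ) (s : ℝ) :
    s • ((∑ k, ((nkv k : ℝ)⁻¹ • S k)⁻¹)⁻¹ *ᵥ (∑ k, ((nkv k : ℝ)⁻¹ • S k)⁻¹ *ᵥ θ k) - β)
      = ∑ k, ((∑ k', r k' • (S k')⁻¹)⁻¹ * (r k • (S k)⁻¹)) *ᵥ (s • (θ k - β)) := by
  have hnk : ∀ k, (nkv k : ℝ) ≠ 0 := by
    intro k h
    exact hrne k (by rw [hr k, h, zero_div])
  set T := ∑ k, r k • (S k)⁻¹ with hTdef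
  set B := fun k => ((nkv k : ℝ)⁻¹ • S k)⁻¹ with hBdef
  have hB : ∀ k, B k = (nkv k : ℝ) • (S k)⁻¹ := fun k =>
    Matrix.inv_eq_right_inv (by
      rw [Matrix.smul_mul, Matrix.mul_smul, Matrix.mul_nonsing_inv _ (hSdet k), smul_smul,
        inv_mul_cancel₀ (hnk k), one_smul])
  have hA : ∑ k, B k = (n : ℝ) • T := by
    rw [hTdef, Finset.smul_sum]
    refine Finset.sum_congr rfl fun k _ => ?_
    rw [hB k, smul_smul, hr k, mul_comm, div_mul_cancel₀ _ hn]
  have hAinv : (∑ k, B k)⁻¹ = (n : ℝ)⁻¹ • T⁻¹ :=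
    Matrix.inv_eq_right_inv (by
      rw [hA, Matrix.smul_mul, Matrix.mul_smul, smul_smul, Matrix.mul_nonsing_inv _ hTdet,
        mul_inv_cancel₀ hn, one_smul])
  have hA1 : (∑ k, B k)⁻¹ * (∑ k, B k) = 1 := by
    rw [hAinv, hA, Matrix.smul_mul, Matrix.mul_smul, smul_smul, Matrix.nonsing_inv_mul _ hTdet,
      inv_mul_cancel₀ hn, one_smul]
  calc s • ((∑ k, B k)⁻¹ *ᵥ (∑ k, B k *ᵥ θ k) - β)
      = s • ((∑ k, B k)⁻¹ *ᵥ (∑ k, B k *ᵥ (θ k - β))) := by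
        congr 1 <;> skip
        have hsplit : (∑ k, B k *ᵥ θ k) = (∑ k, B k *ᵥ (θ k - β)) + (∑ k, B k) *ᵥ β := by
          rw [meta_sum_mulVec', ← Finset.sum_add_distrib]
          refine Finset.sum_congr rfl fun k _ => ?_
          rw [← Matrix.mulVec_add, sub_add_cancel]
        rw [hsplit, Matrix.mulVec_add, Matrix.mulVec_mulVec, hA1, Matrix.one_mulVec,
          add_sub_cancel_right]
    _ = (∑ k, B k)⁻¹ *ᵥ (∑ k, B k *ᵥ (s • (θ k - β))) := by
        rw [show (∑ k, B k *ᵥ (s • (θ k - β))) = s • ∑ k, B k *ᵥ (θ k - β) by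
          simp only [Matrix.mulVec_smul]; rw [Finset.smul_sum], Matrix.mulVec_smul]
    _ = ∑ k, ((∑ k', B k')⁻¹ * B k) *ᵥ (s • (θ k - β)) := by
        have hms := map_sum ((∑ k, B k)⁻¹).mulVecLin
          (fun k => B k *ᵥ (s • (θ k - β))) Finset.univ
        simp only [Matrix.mulVecLin_apply] at hms
        rw [hms]
        exact Finset.sum_congr rfl fun k _ => Matrix.mulVec_mulVec _ _ _
    _ = ∑ k, (T⁻¹ * (r k • (S k)⁻¹)) *ᵥ (s • (θ k - β)) := by
        refine Finset.sum_congr rfl fun k _ => ?_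
        congr 1
        rw [hAinv, hB k, Matrix.smul_mul, Matrix.mul_smul, Matrix.mul_smul, smul_smul,
          hr k, div_eq_inv_mul]


/-- **Expansion of the fixed-effect meta-analysis estimator** (equation (10) of the
Supplement of Tang, Kundu & Chatterjee): if the estimated covariance matrices `Σ̂_{n,k}`
converge in probability to a common invertible `Σ`, `n_k/n → c_k > 0` and
`√n (θ̂_{n,k} − β*)` is bounded in probability, then
`√n (β̂_meta − β*) = (Σ_k c_k)⁻¹ Σ_k c_k √n (θ̂_{n,k} − β*) + o_P(1)`. -/
theorem meta_analysis_expansion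
    {Ω : Type} [MeasurableSpace Ω] (P : Measure Ω) [IsProbabilityMeasure P]
    (p K : ℕ) (hK : 1 ≤ K)
    (βstar : EuclideanSpace ℝ (Fin p))
    -- the study estimators
    (θhat : ℕ → Ω → Fin K → EuclideanSpace ℝ (Fin p))
    (hθmeas : ∀ n k, Measurable (fun ω => θhat n ω k))
    -- estimated covariance matrices converging in probability to a common invertible Σ
    (Shat : ℕ → Ω → Fin K → Matrix (Fin p) (Fin p) ℝ)
    (hShatmeas : ∀ n k i j, Measurable (fun ω => Shat n ω k i j))
    (Sig : Matrix (Fin p) (Fin p) ℝ) (hSig : IsUnit Sig)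
    (hShatconv : ∀ k i j,
      TendstoInMeasure P (fun n ω => Shat n ω k i j) atTop (fun _ => Sig i j))
    -- study sample sizes with n_k/n → c_k > 0
    (nk : Fin K → ℕ → ℕ) (c : Fin K → ℝ) (hc : ∀ k, 0 < c k)
    (hnk : ∀ k, Tendsto (fun n => (nk k n : ℝ) / n) atTop (𝓝 (c k)))
    -- √n (θ̂_{n,k} − β*) is bounded in probability (tight)
    (htight : ∀ k, ∀ ε : ℝ, 0 < ε → ∃ M : ℝ, ∀ᶠ n : ℕ in atTop,
      P {ω | M < ‖(Real.sqrt n) • (θhat n ω k - βstar)‖} ≤ ENNReal.ofReal ε)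
    -- the fixed-effect meta-analysis estimator
    (βmeta : ℕ → Ω → EuclideanSpace ℝ (Fin p))
    (hβmeta : ∀ n ω (j : Fin p), βmeta n ω j =
      ((∑ k, ((nk k n : ℝ)⁻¹ • Shat n ω k)⁻¹)⁻¹).mulVec
        (∑ k, (((nk k n : ℝ)⁻¹ • Shat n ω k)⁻¹).mulVec (fun i => θhat n ω k i)) j) :
    TendstoInMeasure P
      (fun (n : ℕ) ω => (Real.sqrt n) • (βmeta n ω - βstar)
        - (∑ k, c k)⁻¹ • ∑ k, c k • ((Real.sqrt n) • (θhat n ω k - βstar)))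
      atTop (fun _ => (0 : EuclideanSpace ℝ (Fin p))) := by
  classical
  have hKpos : 0 < K := hK
  have hne : Nonempty (Fin K) := ⟨⟨0, hKpos⟩⟩
  have hsc : 0 < ∑ k, c k := Finset.sum_pos (fun k _ => hc k) Finset.univ_nonempty
  have hdetSig : IsUnit Sig.det := (Matrix.isUnit_iff_isUnit_det Sig).1 hSig
  have hdetSig' : Sig.det ≠ 0 := hdetSig.ne_zero
  set a : (Fin K → ℝ) × (Fin K → Fin p → Fin p → ℝ) := (c, fun _ i j => Sig i j) with ha
  have hTa : metaT K p a = (∑ k, c k) • Sig⁻¹ := metaT_at c Sig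
  have hTadet : (metaT K p a).det ≠ 0 := by
    rw [hTa, Matrix.det_smul]
    refine mul_ne_zero (pow_ne_zero _ hsc.ne') ?_
    rw [Matrix.det_nonsing_inv, Ring.inverse_eq_inv']
    exact inv_ne_zero hdetSig'
  -- convergence in measure of the underlying data
  have hFr : Tendsto (fun n => fun k => (nk k n : ℝ) / n) atTop (𝓝 c) := tendsto_pi_nhds.2 hnk
  have hFS : TendstoInMeasure P (fun n ω => fun k i j => Shat n ω k i j) atTop
      (fun _ => fun k i j => Sig i j) :=
    meta_tendstoInMeasure_pi fun k => meta_tendstoInMeasure_pi fun i =>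
      meta_tendstoInMeasure_pi fun j => hShatconv k i j
  have hF : TendstoInMeasure P
      (fun n ω => ((fun k => (nk k n : ℝ) / n, fun k i j => Shat n ω k i j) :
        (Fin K → ℝ) × (Fin K → Fin p → Fin p → ℝ))) atTop (fun _ => a) :=
    meta_tendstoInMeasure_prod (meta_tendstoInMeasure_const hFr) hFS
  -- convergence of the coefficient matrices
  have hGconv : TendstoInMeasure P
      (fun n ω => metaG K p (fun k => (nk k n : ℝ) / n, fun k i j => Shat n ω k i j))
      atTop (fun _ => metaG K p a) :=
    meta_tendstoInMeasure_comp hF (metaG_contAt c Sig hdetSig' hTadet)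
  -- the invertibility region
  have hψ1cont : Continuous (fun x : (Fin K → ℝ) × (Fin K → Fin p → Fin p → ℝ) =>
      (∏ k, (Matrix.of (x.2 k)).det) * ∏ k, x.1 k) := by
    refine Continuous.mul ?_ ?_
    · exact continuous_finset_prod _ fun k _ =>
        Continuous.matrix_det ((continuous_apply k).comp continuous_snd)
    · exact continuous_finset_prod _ fun k _ => (continuous_apply k).comp continuous_fst
  have hψ1a : (∏ k, (Matrix.of (a.2 k)).det) * ∏ k, a.1 k ≠ 0 := by
    refine mul_ne_zero (Finset.prod_ne_zero_iff.2 fun k _ => ?_)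
      (Finset.prod_ne_zero_iff.2 fun k _ => (hc k).ne')
    show Sig.det ≠ 0
    exact hdetSig'
  obtain ⟨ρ1, hρ1, hρ1imp⟩ := Metric.continuousAt_iff.1 (hψ1cont.continuousAt (x := a))
    |(∏ k, (Matrix.of (a.2 k)).det) * ∏ k, a.1 k| (abs_pos.2 hψ1a)
  have hψ2cont : ContinuousAt (fun x : (Fin K → ℝ) × (Fin K → Fin p → Fin p → ℝ) =>
      (metaT K p x).det) a :=
    Tendsto.comp (continuous_id.matrix_det).continuousAt (metaT_contAt c Sig hdetSig')
  obtain ⟨ρ2, hρ2, hρ2imp⟩ := Metric.continuousAt_iff.1 hψ2cont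
    |(metaT K p a).det| (abs_pos.2 hTadet)
  set ρ : ℝ := min ρ1 ρ2 with hρdef
  have hρ : 0 < ρ := lt_min hρ1 hρ2
  -- main estimate
  rw [tendstoInMeasure_iff_dist]
  intro ε hε
  rw [ENNReal.tendsto_nhds_zero]
  intro ε' hε'
  set γ : ENNReal := ε' / ((K : ENNReal) + 2) with hγdef
  have hγ : 0 < γ := ENNReal.div_pos hε'.ne'
    (ENNReal.add_ne_top.2 ⟨ENNReal.natCast_ne_top K, ENNReal.ofNat_ne_top⟩)
  obtain ⟨ε0, hε0, hε0γ⟩ := meta_exists_ofReal_le hγ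
  choose Mf hMf using fun k => htight k ε0 hε0
  set M : ℝ := 1 + ∑ k, |Mf k| with hMdef
  have hM1 : (1 : ℝ) ≤ M := le_add_of_nonneg_right (Finset.sum_nonneg fun k _ => abs_nonneg _)
  have hM0 : (0 : ℝ) < M := lt_of_lt_of_le one_pos hM1
  have hMk : ∀ k, Mf k ≤ M := by
    intro k
    have h1 : |Mf k| ≤ ∑ k', |Mf k'| :=
      Finset.single_le_sum (f := fun k' => |Mf k'|) (fun k' _ => abs_nonneg _)
        (Finset.mem_univ k)
    have := le_abs_self (Mf k)
    rw [hMdef]; linarith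
  set δ : ℝ := ε / ((K : ℝ) * ((p : ℝ) ^ 2 + 1) * M) with hδdef
  have hKR : (0 : ℝ) < (K : ℝ) := by exact_mod_cast hKpos
  have hden : (0 : ℝ) < (K : ℝ) * ((p : ℝ) ^ 2 + 1) * M :=
    mul_pos (mul_pos hKR (by positivity)) hM0
  have hδ : 0 < δ := div_pos hε hden
  have hAev : ∀ᶠ n in atTop, P {ω | ρ ≤
      dist ((fun k => (nk k n : ℝ) / n, fun k i j => Shat n ω k i j) :
        (Fin K → ℝ) × (Fin K → Fin p → Fin p → ℝ)) a} ≤ γ :=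
    ENNReal.tendsto_nhds_zero.1 (tendstoInMeasure_iff_dist.1 hF ρ hρ) γ hγ
  have hBev : ∀ᶠ n in atTop, P {ω | δ ≤
      dist (metaG K p (fun k => (nk k n : ℝ) / n, fun k i j => Shat n ω k i j))
        (metaG K p a)} ≤ γ :=
    ENNReal.tendsto_nhds_zero.1 (tendstoInMeasure_iff_dist.1 hGconv δ hδ) γ hγ
  have hTev : ∀ k, ∀ᶠ n : ℕ in atTop,
      P {ω | M < ‖(Real.sqrt n) • (θhat n ω k - βstar)‖} ≤ γ := by
    intro k
    filter_upwards [hMf k] with n hn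
    refine le_trans (measure_mono ?_) (hn.trans hε0γ)
    intro ω hω
    exact lt_of_le_of_lt (hMk k) hω
  filter_upwards [hAev, hBev, eventually_all.2 hTev, eventually_ge_atTop 1]
    with n hAn hBn hTn hn1
  -- inclusion of the bad event
  have hincl : {ω | ε ≤ dist ((Real.sqrt n) • (βmeta n ω - βstar)
        - (∑ k, c k)⁻¹ • ∑ k, c k • ((Real.sqrt n) • (θhat n ω k - βstar)) :
        EuclideanSpace ℝ (Fin p)) 0} ⊆
      {ω | ρ ≤ dist ((fun k => (nk k n : ℝ) / n, fun k i j => Shat n ω k i j) :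
          (Fin K → ℝ) × (Fin K → Fin p → Fin p → ℝ)) a} ∪
      ({ω | δ ≤ dist (metaG K p (fun k => (nk k n : ℝ) / n, fun k i j => Shat n ω k i j))
          (metaG K p a)} ∪
        ⋃ k, {ω | M < ‖(Real.sqrt n) • (θhat n ω k - βstar)‖}) := by
    intro ω hω
    by_contra hcon
    simp only [Set.mem_union, Set.mem_iUnion, Set.mem_setOf_eq, not_or, not_exists,
      not_le, not_lt] at hcon
    obtain ⟨h1, h2, h3⟩ := hcon
    simp only [Set.mem_setOf_eq] at hω
    -- invertibility facts on the good event
    have hψ1x := hρ1imp (lt_of_lt_of_le h1 (min_le_left _ _))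
    have hψ1ne : (∏ k, (Matrix.of ((fun k i j => Shat n ω k i j) k)).det) *
        ∏ k, (nk k n : ℝ) / n ≠ 0 := by
      intro h0
      rw [Real.dist_eq, h0, zero_sub, abs_neg] at hψ1x
      exact lt_irrefl _ hψ1x
    have hSdet : ∀ k, (Shat n ω k).det ≠ 0 := by
      intro k
      have := (mul_ne_zero_iff.1 hψ1ne).1
      exact Finset.prod_ne_zero_iff.1 this k (Finset.mem_univ k)
    have hrne : ∀ k, (nk k n : ℝ) / n ≠ 0 := by
      intro k
      have := (mul_ne_zero_iff.1 hψ1ne).2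
      exact Finset.prod_ne_zero_iff.1 this k (Finset.mem_univ k)
    have hψ2x := hρ2imp (lt_of_lt_of_le h1 (min_le_right _ _))
    have hTdet : (∑ k, ((nk k n : ℝ) / n) • (Shat n ω k)⁻¹).det ≠ 0 := by
      intro h0
      have h0' : (metaT K p ((fun k => (nk k n : ℝ) / n, fun k i j => Shat n ω k i j) :
          (Fin K → ℝ) × (Fin K → Fin p → Fin p → ℝ))).det = 0 := h0
      rw [Real.dist_eq, h0', zero_sub, abs_neg] at hψ2x
      exact lt_irrefl _ hψ2x
    have hnR : ((n : ℕ) : ℝ) ≠ 0 := by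
      have : (0 : ℝ) < n := by exact_mod_cast hn1
      exact this.ne'
    -- the algebraic identity
    have halg := meta_algebra (p := p) (K := K) n hnR (fun k => (nk k n : ℝ) / n)
      (fun k => Shat n ω k) (fun k => nk k n) (fun k => rfl) hrne
      (fun k => isUnit_iff_ne_zero.2 (hSdet k)) (isUnit_iff_ne_zero.2 hTdet)
      (fun k i => θhat n ω k i) (fun i => βstar i) (Real.sqrt n)
    -- coordinates
    have hXcoord : ∀ (k : Fin K) (i : Fin p),
        ((Real.sqrt n) • (θhat n ω k - βstar)) i = Real.sqrt n * (θhat n ω k i - βstar i) := by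
      intro k i
      rw [PiLp.smul_apply, PiLp.sub_apply, smul_eq_mul]
    have hkey : ∀ j : Fin p,
        ((Real.sqrt n) • (βmeta n ω - βstar)
          - (∑ k, c k)⁻¹ • ∑ k, c k • ((Real.sqrt n) • (θhat n ω k - βstar)) :
          EuclideanSpace ℝ (Fin p)) j =
        ∑ k, ((Matrix.of (metaG K p ((fun k => (nk k n : ℝ) / n,
              fun k i j => Shat n ω k i j)) k)
            - Matrix.of (metaG K p a k)) *ᵥ
          (fun i => ((Real.sqrt n) • (θhat n ω k - βstar)) i)) j := by
      intro j
      rw [PiLp.sub_apply]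
      have hterm1 : ((Real.sqrt n) • (βmeta n ω - βstar) : EuclideanSpace ℝ (Fin p)) j
          = ∑ k, ((Matrix.of (metaG K p ((fun k => (nk k n : ℝ) / n,
              fun k i j => Shat n ω k i j)) k)) *ᵥ
            (fun i => ((Real.sqrt n) • (θhat n ω k - βstar)) i)) j := by
        rw [PiLp.smul_apply, PiLp.sub_apply, smul_eq_mul, hβmeta n ω j]
        have hlhs : Real.sqrt n *
            (((∑ k, ((nk k n : ℝ)⁻¹ • Shat n ω k)⁻¹)⁻¹).mulVec
              (∑ k, (((nk k n : ℝ)⁻¹ • Shat n ω k)⁻¹).mulVec (fun i => θhat n ω k i)) j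
              - βstar j)
            = ((Real.sqrt n) • ((∑ k, ((nk k n : ℝ)⁻¹ • Shat n ω k)⁻¹)⁻¹ *ᵥ
                (∑ k, ((nk k n : ℝ)⁻¹ • Shat n ω k)⁻¹ *ᵥ (fun i => θhat n ω k i))
                - (fun i => βstar i)) : Fin p → ℝ) j := by
          simp [Pi.smul_apply, Pi.sub_apply, smul_eq_mul]
        rw [hlhs, halg]
        rw [Finset.sum_apply]
        refine Finset.sum_congr rfl fun k _ => ?_
        have hv : (fun i => ((Real.sqrt n) • (θhat n ω k - βstar)) i)
            = ((Real.sqrt n) • ((fun i => θhat n ω k i) - fun i => βstar i) : Fin p → ℝ) := by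
          funext i
          rw [hXcoord k i]; rfl
        rw [hv]
        rfl
      have hterm2 : ((∑ k, c k)⁻¹ • ∑ k, c k • ((Real.sqrt n) • (θhat n ω k - βstar)) :
          EuclideanSpace ℝ (Fin p)) j
          = ∑ k, ((Matrix.of (metaG K p a k)) *ᵥ
            (fun i => ((Real.sqrt n) • (θhat n ω k - βstar)) i)) j := by
        have hs : (∑ k, c k • ((Real.sqrt n) • (θhat n ω k - βstar)) :
            EuclideanSpace ℝ (Fin p)) j
            = ∑ k, (c k • ((Real.sqrt n) • (θhat n ω k - βstar)) :
              EuclideanSpace ℝ (Fin p)) j := by rw [WithLp.ofLp_sum, Finset.sum_apply]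
        rw [PiLp.smul_apply, hs, smul_eq_mul, Finset.mul_sum]
        refine Finset.sum_congr rfl fun k _ => ?_
        rw [metaG_at c Sig hdetSig hsc.ne' k, Matrix.smul_mulVec, Matrix.one_mulVec]
        show (∑ k', c k')⁻¹ * ((c k • ((Real.sqrt n) • (θhat n ω k - βstar)) :
            EuclideanSpace ℝ (Fin p)) j)
          = ((∑ k', c k')⁻¹ * c k) * (((Real.sqrt n) • (θhat n ω k - βstar)) j)
        rw [PiLp.smul_apply, smul_eq_mul, mul_assoc]
      rw [hterm1, hterm2, ← Finset.sum_sub_distrib]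
      refine Finset.sum_congr rfl fun k _ => ?_
      rw [Matrix.sub_mulVec, Pi.sub_apply]
    -- norm estimate
    set Gx := metaG K p ((fun k => (nk k n : ℝ) / n, fun k i j => Shat n ω k i j))
      with hGxdef
    have hent : ∀ (k : Fin K) (i j : Fin p),
        |(Matrix.of (Gx k) - Matrix.of (metaG K p a k)) i j| ≤
          dist Gx (metaG K p a) := by
      intro k i j
      have h' : |Gx k i j - metaG K p a k i j| = dist (Gx k i j) (metaG K p a k i j) :=
        (Real.dist_eq _ _).symm
      have : (Matrix.of (Gx k) - Matrix.of (metaG K p a k)) i j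
          = Gx k i j - metaG K p a k i j := rfl
      rw [this, h']
      calc dist (Gx k i j) (metaG K p a k i j) ≤ dist (Gx k i) (metaG K p a k i) :=
            dist_le_pi_dist _ _ j
        _ ≤ dist (Gx k) (metaG K p a k) := dist_le_pi_dist _ _ i
        _ ≤ dist Gx (metaG K p a) := dist_le_pi_dist _ _ k
    have hnorm : ∀ k : Fin K,
        ‖toEuc ((Matrix.of (Gx k) - Matrix.of (metaG K p a k)) *ᵥ
          (fun i => ((Real.sqrt n) • (θhat n ω k - βstar)) i))‖
        ≤ ((p : ℝ) ^ 2 * δ) * M := by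
      intro k
      have hle := meta_norm_mulVec_le (Matrix.of (Gx k) - Matrix.of (metaG K p a k))
        ((Real.sqrt n) • (θhat n ω k - βstar))
        (toEuc ((Matrix.of (Gx k) - Matrix.of (metaG K p a k)) *ᵥ
          (fun i => ((Real.sqrt n) • (θhat n ω k - βstar)) i)))
        (fun i => by simp [toEuc, Matrix.mulVec, dotProduct])
      refine hle.trans ?_
      have hsum : (∑ i, ∑ j, |(Matrix.of (Gx k) - Matrix.of (metaG K p a k)) i j|)
          ≤ (p : ℝ) ^ 2 * δ := by
        calc (∑ i, ∑ j, |(Matrix.of (Gx k) - Matrix.of (metaG K p a k)) i j|)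
            ≤ ∑ _i : Fin p, ∑ _j : Fin p, δ := by
              refine Finset.sum_le_sum fun i _ => Finset.sum_le_sum fun j _ => ?_
              exact le_of_lt (lt_of_le_of_lt (hent k i j) h2)
          _ = (p : ℝ) ^ 2 * δ := by
              simp [Finset.sum_const, Finset.card_univ, nsmul_eq_mul]
              ring
      have hxle : ‖(Real.sqrt n) • (θhat n ω k - βstar)‖ ≤ M := h3 k
      have hge0 : (0:ℝ) ≤ ∑ i, ∑ j, |(Matrix.of (Gx k) - Matrix.of (metaG K p a k)) i j| :=
        Finset.sum_nonneg fun i _ => Finset.sum_nonneg fun j _ => abs_nonneg _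
      calc (∑ i, ∑ j, |(Matrix.of (Gx k) - Matrix.of (metaG K p a k)) i j|) *
            ‖(Real.sqrt n) • (θhat n ω k - βstar)‖
          ≤ ((p : ℝ) ^ 2 * δ) * ‖(Real.sqrt n) • (θhat n ω k - βstar)‖ :=
            mul_le_mul_of_nonneg_right hsum (norm_nonneg _)
        _ ≤ ((p : ℝ) ^ 2 * δ) * M :=
            mul_le_mul_of_nonneg_left hxle (by positivity)
    -- assemble
    have hDsum : ((Real.sqrt n) • (βmeta n ω - βstar)
        - (∑ k, c k)⁻¹ • ∑ k, c k • ((Real.sqrt n) • (θhat n ω k - βstar)) :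
        EuclideanSpace ℝ (Fin p))
        = ∑ k, toEuc ((Matrix.of (Gx k) - Matrix.of (metaG K p a k)) *ᵥ
            (fun i => ((Real.sqrt n) • (θhat n ω k - βstar)) i)) := by
      ext j
      rw [hkey j, WithLp.ofLp_sum, Finset.sum_apply]
      rfl
    have hDnorm : ‖((Real.sqrt n) • (βmeta n ω - βstar)
        - (∑ k, c k)⁻¹ • ∑ k, c k • ((Real.sqrt n) • (θhat n ω k - βstar)) :
        EuclideanSpace ℝ (Fin p))‖ ≤ (K : ℝ) * (((p : ℝ) ^ 2 * δ) * M) := by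
      rw [hDsum]
      refine (norm_sum_le _ _).trans ?_
      calc ∑ k, ‖toEuc ((Matrix.of (Gx k) - Matrix.of (metaG K p a k)) *ᵥ
            (fun i => ((Real.sqrt n) • (θhat n ω k - βstar)) i))‖
          ≤ ∑ _k : Fin K, ((p : ℝ) ^ 2 * δ) * M := Finset.sum_le_sum fun k _ => hnorm k
        _ = (K : ℝ) * (((p : ℝ) ^ 2 * δ) * M) := by
            simp [Finset.sum_const, Finset.card_univ, nsmul_eq_mul]
    have hfinal : (K : ℝ) * (((p : ℝ) ^ 2 * δ) * M) < ε := by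
      have hδmul : δ * ((K : ℝ) * ((p : ℝ) ^ 2 + 1) * M) = ε := div_mul_cancel₀ _ hden.ne'
      nlinarith [hδ, hM0, hKR]
    rw [dist_zero_right] at hω
    exact absurd hω (not_le.2 (lt_of_le_of_lt hDnorm hfinal))
  -- measure arithmetic
  refine le_trans (measure_mono hincl) ?_
  refine le_trans (measure_union_le _ _) ?_
  have hstep : P ({ω | δ ≤
      dist (metaG K p (fun k => (nk k n : ℝ) / n, fun k i j => Shat n ω k i j))
        (metaG K p a)} ∪
      ⋃ k, {ω | M < ‖(Real.sqrt n) • (θhat n ω k - βstar)‖}) ≤ γ + (K : ENNReal) * γ := by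
    refine le_trans (measure_union_le _ _) ?_
    refine add_le_add hBn ?_
    refine le_trans (measure_iUnion_le _) ?_
    rw [tsum_fintype]
    calc (∑ k, P {ω | M < ‖(Real.sqrt n) • (θhat n ω k - βstar)‖})
        ≤ ∑ _k : Fin K, γ := Finset.sum_le_sum fun k _ => hTn k
      _ = (K : ENNReal) * γ := by
          simp [Finset.sum_const, Finset.card_univ, nsmul_eq_mul]
  refine le_trans (add_le_add hAn hstep) ?_
  have : γ + (γ + (K : ENNReal) * γ) = ((K : ENNReal) + 2) * γ := by ring
  rw [this, hγdef]
  exact ENNReal.mul_div_le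
end
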